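/- arXiv:2410.09344 — 4 statements merged into one kernel-verified Lean document; each statement's English description precedes it below -/
import Mathlib

section
/- Define Φ : (0,1) → ℝ by Φ(x) = (1-2x)/log((1-x)/x) for x ≠ 1/2 and Φ(1/2) = 1/2. Then Φ(x) ≤ 1/2 for all x ∈ (0,1). -/
noncomputable def kearnsSaulPhi (x : ℝ) : ℝ :=
  if x = 1 / 2 then 1 / 2 else (1 - 2 * x) / Real.log ((1 - x) / x)

lemma kearnsSaul_key : ∀ x : ℝ, 0 < x → x < 1 / 2 →
    2 * (1 - 2 * x) ≤ Real.log ((1 - x) / x) := by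
  intro x hx hx2
  set f : ℝ → ℝ := fun y => Real.log (1 - y) - Real.log y - 2 * (1 - 2 * y) with hf
  have hd : ∀ y : ℝ, 0 < y → y < 1 → HasDerivAt f (-(1 - y)⁻¹ - y⁻¹ + 4) y := by
    intro y h0 h1
    have d1 : HasDerivAt (fun y : ℝ => Real.log (1 - y)) (-(1 - y)⁻¹) y := by
      have := (Real.hasDerivAt_log (by linarith : (1 : ℝ) - y ≠ 0)).comp y
        ((hasDerivAt_const y (1:ℝ)).sub (hasDerivAt_id y))
      exact this.congr_deriv (by ring)
    have d2 : HasDerivAt (fun y : ℝ => Real.log y) (y⁻¹) y :=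
      Real.hasDerivAt_log (ne_of_gt h0)
    have d3 : HasDerivAt (fun y : ℝ => 2 * (1 - 2 * y)) (-4) y := by
      have : HasDerivAt (fun y : ℝ => 2 * (1 - 2 * y)) (2 * (0 - 2 * 1)) y :=
        ((hasDerivAt_const y (1:ℝ)).sub ((hasDerivAt_id y).const_mul 2)).const_mul 2
      convert this using 1
      norm_num
    have := ((d1.sub d2).sub d3).congr_deriv (by ring : _ = -(1 - y)⁻¹ - y⁻¹ + 4)
    exact this
  have hanti : AntitoneOn f (Set.Icc x (1 / 2)) := by
    apply antitoneOn_of_deriv_nonpos (convex_Icc _ _)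
    · intro y hy
      simp only [Set.mem_Icc] at hy
      exact ((hd y (by linarith) (by linarith)).continuousAt).continuousWithinAt
    · intro y hy
      rw [interior_Icc] at hy
      exact ((hd y (by linarith [hy.1]) (by linarith [hy.2])).differentiableAt).differentiableWithinAt
    · intro y hy
      rw [interior_Icc] at hy
      obtain ⟨hy1, hy2⟩ := hy
      have h0 : 0 < y := lt_trans hx hy1
      have h1 : y < 1 := by linarith
      rw [(hd y h0 h1).deriv]
      have hinv : 4 ≤ (1 - y)⁻¹ + y⁻¹ := by
        rw [inv_add_inv (by linarith) (ne_of_gt h0)]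
        rw [le_div_iff₀ (by nlinarith)]
        nlinarith
      linarith
  have hmem1 : x ∈ Set.Icc x (1 / 2) := by constructor <;> linarith
  have hmem2 : (1 / 2 : ℝ) ∈ Set.Icc x (1 / 2) := by constructor <;> linarith
  have := hanti hmem1 hmem2 (le_of_lt hx2)
  have hf2 : f (1 / 2) = 0 := by norm_num [hf]
  have hfx : f x = Real.log (1 - x) - Real.log x - 2 * (1 - 2 * x) := rfl
  rw [Real.log_div (by linarith) (ne_of_gt hx)]
  rw [hf2, hfx] at this
  linarith

theorem kearnsSaulPhi_le_half :
    ∀ x ∈ Set.Ioo (0 : ℝ) 1, kearnsSaulPhi x ≤ 1 / 2 := by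
  rintro x ⟨hx0, hx1⟩
  unfold kearnsSaulPhi
  split_ifs with h
  · exact le_refl _
  · rcases lt_or_gt_of_ne h with hlt | hgt
    · have hL : 0 < Real.log ((1 - x) / x) := by
        apply Real.log_pos
        rw [lt_div_iff₀ hx0]
        linarith
      rw [div_le_iff₀ hL]
      have := kearnsSaul_key x hx0 hlt
      linarith
    · have hx' : 0 < 1 - x := by linarith
      have key := kearnsSaul_key (1 - x) hx' (by linarith)
      have hlog : Real.log ((1 - (1 - x)) / (1 - x)) = - Real.log ((1 - x) / x) := by
        rw [show (1 - (1 - x)) = x by ring, ← Real.log_inv]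
        congr 1
        field_simp
      rw [hlog] at key
      have hL : Real.log ((1 - x) / x) < 0 := by
        apply Real.log_neg
        · positivity
        · rw [div_lt_one hx0]; linarith
      rw [div_le_iff_of_neg hL]
      linarith
end

section
/- (Kearns–Saul moment bound for a single Bernoulli) For any p ∈ (0,1), any real α, and any s ∈ ℝ: p·exp(s·α·(1-p)) + (1-p)·exp(-s·α·p) ≤ exp(s²α²·Φ(p)/4), where Φ(p) = (1-2p)/log((1-p)/p) for p ≠ 1/2 and Φ(1/2) = 1/2. -/
open Real Set

lemma ks_mono {f f' : ℝ → ℝ} (hf : ∀ x, HasDerivAt f (f' x) x) {s : Set ℝ}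
    (hs : Convex ℝ s) (h : ∀ x ∈ s, 0 ≤ f' x) : MonotoneOn f s := by
  apply monotoneOn_of_deriv_nonneg hs
    (fun x _ => (hf x).continuousAt.continuousWithinAt)
    (fun x hx => (hf x).differentiableAt.differentiableWithinAt)
  intro x hx
  rw [(hf x).deriv]
  exact h x (interior_subset hx)

lemma ks_anti {f f' : ℝ → ℝ} (hf : ∀ x, HasDerivAt f (f' x) x) {s : Set ℝ}
    (hs : Convex ℝ s) (h : ∀ x ∈ s, f' x ≤ 0) : AntitoneOn f s := by
  apply antitoneOn_of_deriv_nonpos hs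
    (fun x _ => (hf x).continuousAt.continuousWithinAt)
    (fun x hx => (hf x).differentiableAt.differentiableWithinAt)
  intro x hx
  rw [(hf x).deriv]
  exact h x (interior_subset hx)

lemma ks_sinh_le_mul_cosh {y : ℝ} (hy : 0 ≤ y) : Real.sinh y ≤ y * Real.cosh y := by
  have hd : ∀ x : ℝ, HasDerivAt (fun z : ℝ => z * Real.cosh z - Real.sinh z)
      (x * Real.sinh x) x := by
    intro x
    have h1 := ((hasDerivAt_id x).mul (Real.hasDerivAt_cosh x)).sub (Real.hasDerivAt_sinh x)
    refine h1.congr_deriv ?_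
    simp [mul_comm]
  have h := ks_mono hd (convex_Ici (0:ℝ)) (fun x hx => mul_nonneg hx (Real.sinh_nonneg_iff.2 hx))
  have := h (Set.self_mem_Ici) hy hy
  simp at this
  linarith


lemma ks_le_of_sq_le {a b : ℝ} (ha : 0 ≤ a) (hb : 0 ≤ b) (h : a^2 ≤ b^2) : a ≤ b := by
  nlinarith

set_option maxHeartbeats 2000000 in
lemma ks_core (p : ℝ) (hp0 : 0 < p) (hp2 : p < 1/2) (t : ℝ) :
    p * Real.exp (t * (1 - p)) + (1 - p) * Real.exp (-(t * p)) ≤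
      Real.exp (t ^ 2 * ((1 - 2 * p) / Real.log ((1 - p) / p)) / 4) := by
  obtain ⟨q, hq⟩ : ∃ q : ℝ, q = 1 - p := ⟨_, rfl⟩
  have hsum : p + q = 1 := by rw [hq]; ring
  have hq0 : 0 < q := by rw [hq]; linarith
  have hpq : p < q := by rw [hq]; linarith
  have hx1 : 1 < q / p := (one_lt_div hp0).2 hpq
  obtain ⟨w, hwdef⟩ : ∃ w : ℝ, w = Real.log (q / p) := ⟨_, rfl⟩
  have hw : 0 < w := hwdef ▸ Real.log_pos hx1
  obtain ⟨c, hcdef⟩ : ∃ c : ℝ, c = (q - p) / (4 * w) := ⟨_, rfl⟩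
  have hc0 : 0 < c := hcdef ▸ div_pos (by linarith) (by positivity)
  have h4cw : 4 * c * w = q - p := by
    rw [hcdef]; field_simp
  have hexpw : Real.exp w = q / p := by rw [hwdef]; exact Real.exp_log (by positivity)
  -- key inequality 1 : p*q ≤ 2*c
  have hKey1 : p * q ≤ 2 * c := by
    have hs : w ≤ Real.sinh w := Real.self_le_sinh_iff.2 hw.le
    have hsinh2 : 2 * p * q * Real.sinh w = q ^ 2 - p ^ 2 := by
      rw [Real.sinh_eq, Real.exp_neg, hexpw, inv_div]
      field_simp
    have h2 : 2 * p * q * w ≤ q - p := by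
      nlinarith [mul_le_mul_of_nonneg_left hs (by positivity : (0:ℝ) ≤ 2 * p * q), hsinh2, hsum]
    nlinarith [h2, h4cw, hw]
  -- key inequality 2 : 8*c ≤ 1
  have hKey2 : 8 * c ≤ 1 := by
    have ha : (0:ℝ) < Real.exp (w / 2) := Real.exp_pos _
    have ha2 : Real.exp (w / 2) ^ 2 = q / p := by
      rw [sq, ← Real.exp_add, show w / 2 + w / 2 = w by ring, hexpw]
    have hpa : p * Real.exp (w / 2) ^ 2 = q := by
      rw [ha2]; field_simp
    have hainv : Real.exp (w / 2) * (Real.exp (w / 2))⁻¹ = 1 := mul_inv_cancel₀ (ne_of_gt ha)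
    have hsc := ks_sinh_le_mul_cosh (by linarith : (0:ℝ) ≤ w / 2)
    rw [Real.sinh_eq, Real.cosh_eq, Real.exp_neg] at hsc
    have h1 : Real.exp (w / 2) - (Real.exp (w / 2))⁻¹ ≤
        (w / 2) * (Real.exp (w / 2) + (Real.exp (w / 2))⁻¹) := by linarith
    have h2 := mul_le_mul_of_nonneg_left h1 (le_of_lt (mul_pos hp0 ha))
    have e1 : p * Real.exp (w / 2) * (Real.exp (w / 2) - (Real.exp (w / 2))⁻¹) = q - p := by
      linear_combination hpa - p * hainv
    have e2 : p * Real.exp (w / 2) * ((w / 2) * (Real.exp (w / 2) + (Real.exp (w / 2))⁻¹)) =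
        (w / 2) * (q + p) := by
      linear_combination (w / 2) * hpa + (w / 2) * p * hainv
    have hqp : q - p ≤ w / 2 := by
      rw [e1, e2] at h2
      nlinarith [h2, hsum]
    nlinarith [hqp, h4cw, hw]
  -- key 3 : 4*c ≤ q
  have hKey3 : 4 * c ≤ q := by
    have h1 : Real.log (p / q) ≤ p / q - 1 := Real.log_le_sub_one_of_pos (by positivity)
    have h2 : Real.log (p / q) = -w := by
      rw [hwdef, ← Real.log_inv, inv_div]
    rw [h2] at h1
    have h3 : q - p ≤ q * w := by
      have := mul_le_mul_of_nonneg_left h1 (le_of_lt hq0)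
      have hqq : q * (p / q) = p := by field_simp
      nlinarith [this, hqq]
    nlinarith [h3, h4cw, hw]
  -- key 4 : p ≤ 4*c
  have hKey4 : p ≤ 4 * c := by
    have h1 : Real.log (q / p) ≤ q / p - 1 := Real.log_le_sub_one_of_pos (by positivity)
    have h2 : p * w ≤ q - p := by
      have := mul_le_mul_of_nonneg_left h1 (le_of_lt hp0)
      have hpp : p * (q / p) = q := by field_simp
      nlinarith [this, hpp]
    nlinarith [h2, h4cw, hw]
  -- roots of the quadratic controlling the second derivative
  obtain ⟨d, hddef⟩ : ∃ d : ℝ, d = Real.sqrt (1 - 8*c) := ⟨_, rfl⟩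
  have hd0 : 0 ≤ d := hddef ▸ Real.sqrt_nonneg _
  have hd2 : d^2 = 1 - 8*c := hddef ▸ Real.sq_sqrt (by linarith)
  obtain ⟨u1, hu1def⟩ : ∃ u : ℝ, u = q*(1 - 4*c - d)/(4*c*p) := ⟨_, rfl⟩
  obtain ⟨u2, hu2def⟩ : ∃ u : ℝ, u = q*(1 - 4*c + d)/(4*c*p) := ⟨_, rfl⟩
  have h8c : 0 ≤ 8*c*(2*c - p*q) := mul_nonneg (by linarith) (by linarith)
  have hu1 : 1 ≤ u1 := by
    have hA : 0 ≤ q*(1 - 4*c) - 4*c*p := by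
      have e : q*(1 - 4*c) - 4*c*p = q - 4*c := by linear_combination (-4*c)*hsum
      linarith
    have hid1 : (q*(1 - 4*c) - 4*c*p)^2 - (q*d)^2 = 8*c*(2*c - p*q) := by
      linear_combination (-q^2)*hd2 + 16*c^2*(p+q+1)*hsum
    have hsq1 : (q*d)^2 ≤ (q*(1 - 4*c) - 4*c*p)^2 := by linarith
    have hqd : q*d ≤ q*(1 - 4*c) - 4*c*p :=
      ks_le_of_sq_le (mul_nonneg hq0.le hd0) hA hsq1
    rw [hu1def, le_div_iff₀ (by positivity)]
    have e : q*(1 - 4*c - d) = (q*(1 - 4*c) - 4*c*p) - q*d + 4*c*p := by ring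
    linarith
  have hu1pos : 0 < u1 := lt_of_lt_of_le one_pos hu1
  have hu2q : u2 ≤ q^2/p^2 := by
    have hB : 0 ≤ 4*c - p := by linarith
    have hid2 : (4*c - p)^2 - (p*d)^2 = 8*c*(2*c - p*q) := by
      linear_combination (-p^2)*hd2 + 8*c*p*hsum
    have hsq2 : (p*d)^2 ≤ (4*c - p)^2 := by linarith
    have hpd : p*d ≤ 4*c - p :=
      ks_le_of_sq_le (mul_nonneg hp0.le hd0) hB hsq2
    rw [hu2def, div_le_div_iff₀ (by positivity) (by positivity)]
    have h3 := mul_le_mul_of_nonneg_left hpd (mul_pos hq0 hp0).le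
    have e : q*(1 - 4*c + d)*p^2 - q^2*(4*c*p) = q*p*(p*d) - q*p*(4*c - p) + (-4*c*p*q)*(p + q - 1) := by
      ring
    have e2 : (-4*c*p*q)*(p + q - 1) = 0 := by rw [hsum]; ring
    linarith
  have hu12 : u1 ≤ u2 := by
    rw [hu1def, hu2def]
    have e : q*(1 - 4*c + d) - q*(1 - 4*c - d) = 2*(q*d) := by ring
    have : q*(1 - 4*c - d) ≤ q*(1 - 4*c + d) := by linarith [mul_nonneg hq0.le hd0]
    exact div_le_div_of_nonneg_right this (by positivity)
  -- logs of roots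
  obtain ⟨τ1, hτ1def⟩ : ∃ x : ℝ, x = Real.log u1 := ⟨_, rfl⟩
  obtain ⟨τ2, hτ2def⟩ : ∃ x : ℝ, x = Real.log u2 := ⟨_, rfl⟩
  obtain ⟨T, hTdef⟩ : ∃ x : ℝ, x = 2*w := ⟨_, rfl⟩
  have hu2pos : 0 < u2 := lt_of_lt_of_le hu1pos hu12
  have hτ1nn : 0 ≤ τ1 := hτ1def ▸ Real.log_nonneg hu1
  have hτ12 : τ1 ≤ τ2 := by rw [hτ1def, hτ2def]; exact Real.log_le_log hu1pos hu12
  have hexpτ1 : Real.exp τ1 = u1 := by rw [hτ1def]; exact Real.exp_log hu1pos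
  have hexpτ2 : Real.exp τ2 = u2 := by rw [hτ2def]; exact Real.exp_log hu2pos
  have hexpT : Real.exp T = q^2/p^2 := by
    rw [hTdef, two_mul, Real.exp_add, hexpw]
    rw [div_mul_div_comm]
    ring_nf
  have hτ2T : τ2 ≤ T := by
    have h1 : Real.log (q^2/p^2) = T := by rw [← hexpT, Real.log_exp]
    rw [hτ2def, ← h1]
    exact Real.log_le_log hu2pos hu2q
  -- positivity of the denominator
  have hDpos : ∀ x : ℝ, 0 < p * Real.exp x + q := fun x => add_pos (mul_pos hp0 (Real.exp_pos x)) hq0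
  -- sum and product of roots
  have hv1 : 4*c*p*u1 = q*(1 - 4*c - d) := by
    rw [hu1def]; field_simp
  have hv2 : 4*c*p*u2 = q*(1 - 4*c + d) := by
    rw [hu2def]; field_simp
  have hS : 2*c*p^2*(u1 + u2) = p*q*(1 - 4*c) := by
    linear_combination (p/2)*hv1 + (p/2)*hv2
  have hP' : (16*c^2) * (p^2*(u1*u2)) = (16*c^2) * q^2 := by
    linear_combination (4*c*p*u2)*hv1 + (q*(1 - 4*c - d))*hv2 - q^2*hd2
  have hP'' : p^2*(u1*u2) = q^2 :=
    mul_left_cancel₀ (ne_of_gt (mul_pos (by norm_num) (pow_pos hc0 2))) hP'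
  have hP : 2*c*p^2*(u1*u2) = 2*c*q^2 := by
    linear_combination 2*c*hP''
  have hQfact : ∀ u : ℝ, 2*c*(p*u + q)^2 - p*q*u = 2*c*p^2*(u - u1)*(u - u2) := by
    intro u
    linear_combination u * hS - hP
  -- derivative computations
  have hgd : ∀ x : ℝ, HasDerivAt (fun y : ℝ => p*y + c*y^2 - Real.log (p*Real.exp y + q))
      (p + 2*c*x - p*Real.exp x/(p*Real.exp x + q)) x := by
    intro x
    have h1 : HasDerivAt (fun y : ℝ => p*Real.exp y + q) (p*Real.exp x) x :=
      ((Real.hasDerivAt_exp x).const_mul p).add_const q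
    have h2 : HasDerivAt (fun y : ℝ => Real.log (p*Real.exp y + q))
        (p*Real.exp x/(p*Real.exp x + q)) x := h1.log (hDpos x).ne'
    have h3 : HasDerivAt (fun y : ℝ => p*y + c*y^2) (p + c*(2*x)) x := by
      have ha := (hasDerivAt_id x).const_mul p
      have hb := (hasDerivAt_pow 2 x).const_mul c
      have hc := ha.add hb
      refine hc.congr_deriv ?_
      norm_num
    have h4 := h3.sub h2
    refine h4.congr_deriv ?_
    ring
  have hg'd : ∀ x : ℝ, HasDerivAt (fun y : ℝ => p + 2*c*y - p*Real.exp y/(p*Real.exp y + q))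
      (2*c - p*q*Real.exp x/(p*Real.exp x + q)^2) x := by
    intro x
    have h1 : HasDerivAt (fun y : ℝ => p*Real.exp y + q) (p*Real.exp x) x :=
      ((Real.hasDerivAt_exp x).const_mul p).add_const q
    have hnum : HasDerivAt (fun y : ℝ => p*Real.exp y) (p*Real.exp x) x :=
      (Real.hasDerivAt_exp x).const_mul p
    have hdiv := hnum.div h1 (hDpos x).ne'
    have hlin : HasDerivAt (fun y : ℝ => p + 2*c*y) (2*c) x := by
      have := (hasDerivAt_id x).const_mul (2*c)
      have := this.const_add p
      refine this.congr_deriv ?_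
      ring
    have h4 := hlin.sub hdiv
    refine h4.congr_deriv ?_
    have hD := hDpos x
    field_simp
    ring
  -- sign of the second derivative
  have hsgn_lo : ∀ x : ℝ, Real.exp x ≤ u1 → 0 ≤ 2*c - p*q*Real.exp x/(p*Real.exp x + q)^2 := by
    intro x hx
    have hD := hDpos x
    have h0 : 0 ≤ (u1 - Real.exp x)*(u2 - Real.exp x) :=
      mul_nonneg (by linarith) (by linarith [hu12])
    have hQ := hQfact (Real.exp x)
    have h0' : 0 ≤ 2*c*p^2*((u1 - Real.exp x)*(u2 - Real.exp x)) :=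
      mul_nonneg (mul_nonneg (by linarith) (sq_nonneg p)) h0
    rw [sub_nonneg, div_le_iff₀ (by positivity)]
    linarith [hQ, h0']
  have hsgn_mid : ∀ x : ℝ, u1 ≤ Real.exp x → Real.exp x ≤ u2 →
      2*c - p*q*Real.exp x/(p*Real.exp x + q)^2 ≤ 0 := by
    intro x hx1 hx2
    have hD := hDpos x
    have h0 : 0 ≤ (Real.exp x - u1)*(u2 - Real.exp x) :=
      mul_nonneg (by linarith) (by linarith)
    have hQ := hQfact (Real.exp x)
    have h0' : 0 ≤ 2*c*p^2*((Real.exp x - u1)*(u2 - Real.exp x)) :=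
      mul_nonneg (mul_nonneg (by linarith) (sq_nonneg p)) h0
    rw [sub_nonpos, le_div_iff₀ (by positivity)]
    linarith [hQ, h0']
  have hsgn_hi : ∀ x : ℝ, u2 ≤ Real.exp x → 0 ≤ 2*c - p*q*Real.exp x/(p*Real.exp x + q)^2 := by
    intro x hx
    have hD := hDpos x
    have h0 : 0 ≤ (Real.exp x - u1)*(Real.exp x - u2) :=
      mul_nonneg (by linarith [hu12]) (by linarith)
    have hQ := hQfact (Real.exp x)
    have h0' : 0 ≤ 2*c*p^2*((Real.exp x - u1)*(Real.exp x - u2)) :=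
      mul_nonneg (mul_nonneg (by linarith) (sq_nonneg p)) h0
    rw [sub_nonneg, div_le_iff₀ (by positivity)]
    linarith [hQ, h0']
  -- values at 0 and T
  have hDq0 : p*Real.exp 0 + q = 1 := by rw [Real.exp_zero]; linarith
  have hg'0 : p + 2*c*(0:ℝ) - p*Real.exp 0/(p*Real.exp 0 + q) = 0 := by
    rw [hDq0, Real.exp_zero]; norm_num
  have hg0 : p*(0:ℝ) + c*(0:ℝ)^2 - Real.log (p*Real.exp 0 + q) = 0 := by
    rw [hDq0, Real.log_one]; ring
  have hDT : p*Real.exp T + q = q/p := by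
    rw [hexpT]
    field_simp
    linear_combination hsum
  have hg'T : p + 2*c*T - p*Real.exp T/(p*Real.exp T + q) = 0 := by
    have h5 : p*Real.exp T/(p*Real.exp T + q) = q := by
      rw [hDT, hexpT]
      field_simp
    rw [h5, hTdef]
    linarith [h4cw]
  have hgT : p*T + c*T^2 - Real.log (p*Real.exp T + q) = 0 := by
    rw [hDT, ← hwdef, hTdef]
    linear_combination w*h4cw + w*hsum
  -- monotonicity of the first derivative
  have M1 : MonotoneOn (fun y : ℝ => p + 2*c*y - p*Real.exp y/(p*Real.exp y + q)) (Set.Iic τ1) :=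
    ks_mono hg'd (convex_Iic _) (fun x hx => hsgn_lo x (by
      rw [← hexpτ1]; exact Real.exp_le_exp.2 hx))
  have A2 : AntitoneOn (fun y : ℝ => p + 2*c*y - p*Real.exp y/(p*Real.exp y + q)) (Set.Icc τ1 τ2) :=
    ks_anti hg'd (convex_Icc _ _) (fun x hx => hsgn_mid x
      (by rw [← hexpτ1]; exact Real.exp_le_exp.2 hx.1)
      (by rw [← hexpτ2]; exact Real.exp_le_exp.2 hx.2))
  have M3 : MonotoneOn (fun y : ℝ => p + 2*c*y - p*Real.exp y/(p*Real.exp y + q)) (Set.Ici τ2) :=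
    ks_mono hg'd (convex_Ici _) (fun x hx => hsgn_hi x (by
      rw [← hexpτ2]; exact Real.exp_le_exp.2 hx))
  -- sign of the first derivative on the four regions
  have hG'neg : ∀ x : ℝ, x ≤ 0 → p + 2*c*x - p*Real.exp x/(p*Real.exp x + q) ≤ 0 := by
    intro x hx
    have h := M1 (Set.mem_Iic.2 (le_trans hx hτ1nn)) (Set.mem_Iic.2 hτ1nn) hx
    simp only at h
    linarith
  have hG'pos1 : ∀ x : ℝ, 0 ≤ x → x ≤ τ1 → 0 ≤ p + 2*c*x - p*Real.exp x/(p*Real.exp x + q) := by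
    intro x hx0 hx1
    have h := M1 (Set.mem_Iic.2 (le_trans hx0 hx1)) (Set.mem_Iic.2 hx1) hx0
    simp only at h
    linarith
  have hG'neg2 : ∀ x : ℝ, τ2 ≤ x → x ≤ T → p + 2*c*x - p*Real.exp x/(p*Real.exp x + q) ≤ 0 := by
    intro x hx2 hxT
    have h := M3 (Set.mem_Ici.2 hx2) (Set.mem_Ici.2 (le_trans hx2 hxT)) hxT
    simp only at h
    linarith
  have hG'pos3 : ∀ x : ℝ, T ≤ x → 0 ≤ p + 2*c*x - p*Real.exp x/(p*Real.exp x + q) := by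
    intro x hx
    have h := M3 (Set.mem_Ici.2 hτ2T) (Set.mem_Ici.2 (le_trans hτ2T hx)) hx
    simp only at h
    linarith
  -- g is monotone increasing on [0, τ1]
  have gM : MonotoneOn (fun y : ℝ => p*y + c*y^2 - Real.log (p*Real.exp y + q)) (Set.Icc 0 τ1) :=
    ks_mono hgd (convex_Icc _ _) (fun y hy => hG'pos1 y hy.1 hy.2)
  have hgτ1 : 0 ≤ p*τ1 + c*τ1^2 - Real.log (p*Real.exp τ1 + q) := by
    have h := gM (Set.mem_Icc.2 ⟨le_refl 0, hτ1nn⟩) (Set.mem_Icc.2 ⟨hτ1nn, le_refl τ1⟩) hτ1nn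
    simp only at h
    linarith
  have gA2 : AntitoneOn (fun y : ℝ => p*y + c*y^2 - Real.log (p*Real.exp y + q)) (Set.Icc τ2 T) :=
    ks_anti hgd (convex_Icc _ _) (fun y hy => hG'neg2 y hy.1 hy.2)
  have hgτ2 : 0 ≤ p*τ2 + c*τ2^2 - Real.log (p*Real.exp τ2 + q) := by
    have h := gA2 (Set.mem_Icc.2 ⟨le_refl τ2, hτ2T⟩) (Set.mem_Icc.2 ⟨hτ2T, le_refl T⟩) hτ2T
    simp only at h
    linarith
  -- the key fact : g ≥ 0 everywhere
  have key : ∀ x : ℝ, 0 ≤ p*x + c*x^2 - Real.log (p*Real.exp x + q) := by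
    intro x
    rcases le_total x 0 with hx|hx
    · have gA : AntitoneOn (fun y : ℝ => p*y + c*y^2 - Real.log (p*Real.exp y + q)) (Set.Iic 0) :=
        ks_anti hgd (convex_Iic _) (fun y hy => hG'neg y hy)
      have h := gA (Set.mem_Iic.2 hx) (Set.mem_Iic.2 (le_refl 0)) hx
      simp only at h
      linarith
    rcases le_total x τ1 with h1|h1
    · have h := gM (Set.mem_Icc.2 ⟨le_refl 0, hτ1nn⟩) (Set.mem_Icc.2 ⟨hx, h1⟩) hx
      simp only at h
      linarith
    rcases le_total x τ2 with h2|h2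
    · -- middle zone : unimodal argument
      by_cases hx' : 0 ≤ p + 2*c*x - p*Real.exp x/(p*Real.exp x + q)
      · have gM2 : MonotoneOn (fun y : ℝ => p*y + c*y^2 - Real.log (p*Real.exp y + q)) (Set.Icc τ1 x) := by
          apply ks_mono hgd (convex_Icc _ _)
          intro y hy
          have h := A2 (Set.mem_Icc.2 ⟨hy.1, le_trans hy.2 h2⟩) (Set.mem_Icc.2 ⟨h1, h2⟩) hy.2
          simp only at h
          linarith
        have h := gM2 (Set.mem_Icc.2 ⟨le_refl τ1, h1⟩) (Set.mem_Icc.2 ⟨h1, le_refl x⟩) h1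
        simp only at h
        linarith
      · push_neg at hx'
        have gA3 : AntitoneOn (fun y : ℝ => p*y + c*y^2 - Real.log (p*Real.exp y + q)) (Set.Icc x τ2) := by
          apply ks_anti hgd (convex_Icc _ _)
          intro y hy
          have h := A2 (Set.mem_Icc.2 ⟨h1, h2⟩) (Set.mem_Icc.2 ⟨le_trans h1 hy.1, hy.2⟩) hy.1
          simp only at h
          linarith
        have h := gA3 (Set.mem_Icc.2 ⟨le_refl x, h2⟩) (Set.mem_Icc.2 ⟨h2, le_refl τ2⟩) h2
        simp only at h
        linarith
    rcases le_total x T with h3|h3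
    · have h := gA2 (Set.mem_Icc.2 ⟨h2, h3⟩) (Set.mem_Icc.2 ⟨hτ2T, le_refl T⟩) h3
      simp only at h
      linarith
    · have gM3 : MonotoneOn (fun y : ℝ => p*y + c*y^2 - Real.log (p*Real.exp y + q)) (Set.Ici T) :=
        ks_mono hgd (convex_Ici _) (fun y hy => hG'pos3 y hy)
      have h := gM3 (Set.mem_Ici.2 (le_refl T)) (Set.mem_Ici.2 h3) h3
      simp only at h
      linarith
  -- conclusion
  have hmain := key t
  have hDt := hDpos t
  have hlog : Real.log (p*Real.exp t + q) ≤ p*t + c*t^2 := by linarith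
  have h2 : p*Real.exp t + q ≤ Real.exp (p*t + c*t^2) := by
    rw [← Real.exp_log hDt]
    exact Real.exp_le_exp.2 hlog
  rw [← hq]
  have hq2 : 1 - 2*p = q - p := by rw [hq]; ring
  rw [← hwdef, hq2]
  have e4 : t^2*((q - p)/w)/4 = c*t^2 := by rw [hcdef]; ring
  rw [e4]
  have e5 : t*q = t + -(t*p) := by rw [hq]; ring
  calc p*Real.exp (t*q) + q*Real.exp (-(t*p))
      = Real.exp (-(t*p))*(p*Real.exp t + q) := by rw [e5, Real.exp_add]; ring
    _ ≤ Real.exp (-(t*p)) * Real.exp (p*t + c*t^2) :=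
        mul_le_mul_of_nonneg_left h2 (Real.exp_pos _).le
    _ = Real.exp (c*t^2) := by rw [← Real.exp_add]; congr 1; ring

theorem kearnsSaul_moment_bound :
    ∀ p ∈ Set.Ioo (0 : ℝ) 1, ∀ α s : ℝ,
      p * Real.exp (s * α * (1 - p)) + (1 - p) * Real.exp (-(s * α * p)) ≤
        Real.exp (s ^ 2 * α ^ 2 * kearnsSaulPhi p / 4) := by
  rintro p ⟨hp0, hp1⟩ α s
  by_cases hhalf : p = 1/2
  · subst hhalf
    rw [kearnsSaulPhi, if_pos rfl]
    have h := Real.cosh_le_exp_half_sq (s*α/2)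
    rw [Real.cosh_eq] at h
    have e1 : s * α * (1 - 1/2) = s*α/2 := by ring
    have e2 : -(s * α * (1/2)) = -(s*α/2) := by ring
    rw [e1, e2]
    have e3 : s^2 * α^2 * (1/2) / 4 = (s*α/2)^2/2 := by ring
    rw [e3]
    linarith [h]
  · rw [kearnsSaulPhi, if_neg hhalf]
    by_cases hlt : p < 1/2
    · have h := ks_core p hp0 hlt (s*α)
      rw [show (s*α)^2 = s^2*α^2 from by ring] at h
      exact h
    · have hgt : 1/2 < p := lt_of_le_of_ne (not_lt.1 hlt) (Ne.symm hhalf)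
      have h := ks_core (1-p) (by linarith) (by linarith) (-(s*α))
      simp only [sub_sub_cancel] at h
      have hlog : Real.log ((1-p)/p) = -Real.log (p/(1-p)) := by
        rw [← Real.log_inv, inv_div]
      have e1 : -(s*α) * p = -(s*α*p) := by ring
      have e2 : -(-(s*α) * (1-p)) = s*α*(1-p) := by ring
      have e3 : (-(s*α))^2 * ((1 - 2*(1-p))/Real.log (p/(1-p)))/4
          = s^2*α^2*((1 - 2*p)/Real.log ((1-p)/p))/4 := by
        rw [hlog, div_neg]
        ring
      rw [e1, e2, e3] at h
      linarith [h]
end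

section
/- (Kearns–Saul concentration) Let R_1,…,R_n be independent with R_j ~ Bernoulli(1-p_j), p_j ∈ (0,1), and let α_1,…,α_n ∈ ℝ. Set χ² = Σ_j α_j² Φ(p_j) with Φ(x) = (1-2x)/log((1-x)/x) (Φ(1/2)=1/2). Then for all t > 0, P(|Σ_j α_j (R_j - (1-p_j))| > t) ≤ 2 exp(-t²/χ²). -/
open MeasureTheory ProbabilityTheory

namespace KS

open Real


variable {p a : ℝ}

lemma den_pos (hp0 : 0 < p) (hp1 : p < 1) (s : ℝ) : 0 < p + (1 - p) * Real.exp s :=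
  add_pos hp0 (mul_pos (by linarith) (Real.exp_pos s))

lemma log_ne (hp0 : 0 < p) (hp1 : p < 1) (hp : p ≠ 1/2) : Real.log ((1 - p) / p) ≠ 0 := by
  intro hlog
  rcases Real.log_eq_zero.mp hlog with h | h | h
  · have : (0:ℝ) < (1-p)/p := div_pos (by linarith) hp0
    linarith
  · apply hp
    field_simp at h
    linarith
  · have : (0:ℝ) < (1-p)/p := div_pos (by linarith) hp0
    linarith

lemma phi_mul_log (hp0 : 0 < p) (hp1 : p < 1) :
    kearnsSaulPhi p * Real.log ((1 - p) / p) = 1 - 2 * p := by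
  unfold kearnsSaulPhi
  by_cases h : p = 1/2
  · subst h; norm_num
  · rw [if_neg h, div_mul_cancel₀ _ (log_ne hp0 hp1 h)]

lemma phi_symm (hp0 : 0 < p) (hp1 : p < 1) : kearnsSaulPhi (1 - p) = kearnsSaulPhi p := by
  unfold kearnsSaulPhi
  by_cases h : p = 1/2
  · subst h; norm_num
  · have h' : 1 - p ≠ 1/2 := fun hc => h (by linarith)
    rw [if_neg h, if_neg h']
    have h1 : (1 - (1 - p)) / (1 - p) = ((1-p)/p)⁻¹ := by
      rw [inv_div]; ring_nf
    rw [h1, Real.log_inv]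
    rw [div_neg, ← neg_div]
    ring_nf

lemma phi_pos (hp0 : 0 < p) (hp1 : p < 1) : 0 < kearnsSaulPhi p := by
  unfold kearnsSaulPhi
  by_cases h : p = 1/2
  · subst h; norm_num
  · rw [if_neg h]
    rcases lt_or_gt_of_ne h with hlt | hgt
    · exact div_pos (by linarith) (Real.log_pos (by rw [lt_div_iff₀ hp0]; linarith))
    · apply div_pos_of_neg_of_neg (by linarith)
      apply Real.log_neg (div_pos (by linarith) hp0)
      rw [div_lt_one hp0]; linarith

lemma two_log_le {r : ℝ} (hr : 1 ≤ r) : 2 * Real.log r ≤ r - 1/r := by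
  set f : ℝ → ℝ := fun x => x - x⁻¹ - 2 * Real.log x with hf
  have hd : ∀ x ∈ Set.Ici (1:ℝ), HasDerivAt f (1 - -(x^2)⁻¹ - 2 * x⁻¹) x := by
    intro x hx
    have hx0 : x ≠ 0 := by have : (1:ℝ) ≤ x := hx; positivity
    exact ((hasDerivAt_id x).sub (hasDerivAt_inv hx0)).sub
      ((Real.hasDerivAt_log hx0).const_mul 2)
  have key : MonotoneOn f (Set.Ici 1) := by
    apply monotoneOn_of_deriv_nonneg (convex_Ici 1)
    · exact fun x hx => (hd x hx).differentiableAt.continuousAt.continuousWithinAt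
    · intro x hx
      rw [interior_Ici] at hx
      exact ((hd x (Set.mem_Ici.mpr (le_of_lt (Set.mem_Ioi.mp hx)))).differentiableAt).differentiableWithinAt
    · intro x hx
      rw [interior_Ici] at hx
      rw [(hd x (Set.mem_Ici.mpr (le_of_lt (Set.mem_Ioi.mp hx)))).deriv]
      have hx0 : (0:ℝ) < x := lt_trans one_pos hx
      have e1 : (x^2)⁻¹ = x⁻¹ * x⁻¹ := by rw [sq, mul_inv]
      rw [e1]
      nlinarith [sq_nonneg (1 - x⁻¹)]
  have h1 := key (Set.mem_Ici.mpr le_rfl) (Set.mem_Ici.mpr hr) hr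
  simp only [hf, Real.log_one] at h1
  rw [one_div]
  linarith

lemma phi_ge_2pq (hp0 : 0 < p) (hp1 : p < 1) : 2 * p * (1 - p) ≤ kearnsSaulPhi p := by
  -- reduce to the case p ≤ 1/2 by symmetry
  have main : ∀ x : ℝ, 0 < x → x ≤ 1/2 → 2 * x * (1 - x) ≤ kearnsSaulPhi x := by
    intro x hx0 hx2
    rcases eq_or_lt_of_le hx2 with h | h
    · rw [h]; unfold kearnsSaulPhi; norm_num
    · have hx1 : x < 1 := by linarith
      have hL : 0 < Real.log ((1-x)/x) :=
        Real.log_pos (by rw [lt_div_iff₀ hx0]; linarith)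
      have hr : 1 ≤ (1-x)/x := by rw [le_div_iff₀ hx0]; linarith
      have h2 := two_log_le hr
      have hx0' : x ≠ 0 := ne_of_gt hx0
      have hx1' : (1:ℝ) - x ≠ 0 := by linarith
      have e1 : (1-x)/x - 1/((1-x)/x) = (1 - 2*x) / (x * (1-x)) := by
        field_simp; ring
      rw [e1] at h2
      -- 2 log L ≤ (1-2x)/(x(1-x)), multiply by x(1-x) > 0
      have hxx : 0 < x * (1-x) := mul_pos hx0 (by linarith)
      have h3 : 2 * Real.log ((1-x)/x) * (x * (1-x)) ≤ 1 - 2*x := by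
        have := (mul_le_mul_of_nonneg_right h2 (le_of_lt hxx))
        rwa [div_mul_cancel₀ _ (ne_of_gt hxx)] at this
      -- Φ x = (1-2x)/L ≥ 2 x (1-x)
      unfold kearnsSaulPhi
      rw [if_neg (by intro hc; rw [hc] at h; linarith)]
      rw [le_div_iff₀ hL]
      linarith
  rcases le_or_gt p (1/2) with h | h
  · exact main p hp0 h
  · have := main (1-p) (by linarith) (by linarith)
    rw [phi_symm hp0 hp1] at this
    calc 2 * p * (1-p) = 2 * (1-p) * (1 - (1-p)) := by ring
    _ ≤ kearnsSaulPhi p := this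

/-- The function whose nonnegativity is the Kearns–Saul inequality. -/
noncomputable def Gf (p a s : ℝ) : ℝ :=
  a * s^2 + s * (1 - p) - Real.log (p + (1 - p) * Real.exp s)

noncomputable def Gd (p a s : ℝ) : ℝ :=
  2*a*s + (1 - p) - (1 - p) * Real.exp s / (p + (1 - p) * Real.exp s)

noncomputable def Gdd (p a s : ℝ) : ℝ :=
  2*a - p * (1 - p) * Real.exp s / (p + (1 - p) * Real.exp s)^2

lemma hasDerivAt_den (p : ℝ) (s : ℝ) :
    HasDerivAt (fun s => p + (1 - p) * Real.exp s) ((1 - p) * Real.exp s) s :=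
  ((Real.hasDerivAt_exp s).const_mul (1-p)).const_add p

lemma hasDerivAt_Gf (hp0 : 0 < p) (hp1 : p < 1) (s : ℝ) :
    HasDerivAt (Gf p a) (Gd p a s) s := by
  have hden := den_pos hp0 hp1 s
  have h2 : HasDerivAt (fun s => Real.log (p + (1-p)*Real.exp s))
      ((1-p)*Real.exp s / (p + (1-p)*Real.exp s)) s :=
    (hasDerivAt_den p s).log (ne_of_gt hden)
  have h3 : HasDerivAt (fun s : ℝ => a * s^2 + s*(1-p)) (2*a*s + (1-p)) s := by
    have hpow : HasDerivAt (fun s : ℝ => a * s^2) (a * (2*s)) s := by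
      simpa using (hasDerivAt_pow 2 s).const_mul a
    have hlin : HasDerivAt (fun s : ℝ => s * (1-p)) (1-p) s := by
      simpa using (hasDerivAt_id s).mul_const (1-p)
    exact (hpow.add hlin).congr_deriv (by ring)
  exact h3.sub h2

lemma hasDerivAt_Gd (hp0 : 0 < p) (hp1 : p < 1) (s : ℝ) :
    HasDerivAt (Gd p a) (Gdd p a s) s := by
  have hden := den_pos hp0 hp1 s
  have hq : HasDerivAt (fun s => (1-p) * Real.exp s / (p + (1-p)*Real.exp s))
      (((1-p)*Real.exp s * (p + (1-p)*Real.exp s) -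
        (1-p)*Real.exp s * ((1-p)*Real.exp s)) / (p + (1-p)*Real.exp s)^2) s :=
    ((Real.hasDerivAt_exp s).const_mul (1-p)).div (hasDerivAt_den p s) (ne_of_gt hden)
  have h3 : HasDerivAt (fun s : ℝ => 2*a*s + (1-p)) (2*a) s := by
    have h := ((hasDerivAt_id s).const_mul (2*a)).const_add (1-p)
    simpa [add_comm] using h
  have := h3.sub hq
  apply this.congr_deriv
  unfold Gdd
  have e : (1-p)*Real.exp s * (p + (1-p)*Real.exp s) - (1-p)*Real.exp s * ((1-p)*Real.exp s)
      = p * (1-p) * Real.exp s := by ring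
  rw [e]

lemma hasDerivAt_Gdd (hp0 : 0 < p) (hp1 : p < 1) (s : ℝ) :
    HasDerivAt (Gdd p a)
      (-((p*(1-p)*Real.exp s * ((p+(1-p)*Real.exp s)^2) -
          p*(1-p)*Real.exp s * ((2:ℕ) * (p+(1-p)*Real.exp s)^1 * ((1-p)*Real.exp s))) /
        ((p+(1-p)*Real.exp s)^2)^2)) s := by
  have hden := den_pos hp0 hp1 s
  have hN : HasDerivAt (fun s => p*(1-p)*Real.exp s) (p*(1-p)*Real.exp s) s :=
    (Real.hasDerivAt_exp s).const_mul (p*(1-p))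
  have hD : HasDerivAt (fun s => (p+(1-p)*Real.exp s)^2)
      ((2:ℕ) * (p+(1-p)*Real.exp s)^1 * ((1-p)*Real.exp s)) s :=
    (hasDerivAt_den p s).pow 2
  have hq := hN.div hD (pow_ne_zero 2 (ne_of_gt hden))
  have := (hasDerivAt_const s (2*a)).sub hq
  exact this.congr_deriv (by ring)

lemma Gdd_deriv_eq (hp0 : 0 < p) (hp1 : p < 1) (s : ℝ) :
    deriv (Gdd p a) s =
      p*(1-p)*Real.exp s * ((1-p)*Real.exp s - p) / (p+(1-p)*Real.exp s)^3 := by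
  rw [(hasDerivAt_Gdd hp0 hp1 s).deriv]
  have hden := den_pos hp0 hp1 s
  field_simp
  ring

lemma Gdd_mono (hp0 : 0 < p) (hp1 : p < 1) :
    MonotoneOn (Gdd p a) (Set.Ici (Real.log (p/(1-p)))) := by
  apply monotoneOn_of_deriv_nonneg (convex_Ici _)
  · exact fun x _ => (hasDerivAt_Gdd hp0 hp1 x).differentiableAt.continuousAt.continuousWithinAt
  · exact fun x _ => (hasDerivAt_Gdd hp0 hp1 x).differentiableAt.differentiableWithinAt
  · intro x hx
    rw [interior_Ici] at hx
    rw [Gdd_deriv_eq hp0 hp1 x]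
    have hden := den_pos hp0 hp1 x
    have hq : (0:ℝ) < 1 - p := by linarith
    have hpq : 0 < p / (1-p) := div_pos hp0 hq
    have hge : p ≤ (1-p) * Real.exp x := by
      have h1 : p / (1-p) ≤ Real.exp x := by
        rw [← Real.exp_log hpq]
        exact le_of_lt (Real.exp_lt_exp.mpr hx)
      calc p = (1-p) * (p / (1-p)) := by field_simp
      _ ≤ (1-p) * Real.exp x := by nlinarith
    have hnum : 0 ≤ p*(1-p)*Real.exp x * ((1-p)*Real.exp x - p) := by
      have hA : 0 ≤ p*(1-p)*Real.exp x := by positivity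
      exact mul_nonneg hA (by linarith)
    positivity

lemma Gf_zero : Gf p a 0 = 0 := by
  unfold Gf
  simp [Real.exp_zero]

lemma Gd_zero : Gd p a 0 = 0 := by
  unfold Gd
  rw [Real.exp_zero]
  have : p + (1-p) * 1 = 1 := by ring
  rw [this]
  ring

lemma Gdd_zero : Gdd p a 0 = 2*a - p * (1-p) := by
  unfold Gdd
  rw [Real.exp_zero]
  have : p + (1-p) * 1 = 1 := by ring
  rw [this]
  ring

lemma Gd_at_m (hp0 : 0 < p) (hp1 : p < 1)
    (ham : 2 * a * Real.log (p/(1-p)) = p - 1/2) :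
    Gd p a (Real.log (p/(1-p))) = 0 := by
  unfold Gd
  have hq : (0:ℝ) < 1 - p := by linarith
  have hpq : 0 < p / (1-p) := div_pos hp0 hq
  rw [Real.exp_log hpq]
  have e1 : (1-p) * (p / (1-p)) = p := by field_simp
  rw [e1]
  have e2 : p + p = 2 * p := by ring
  rw [e2]
  rw [mul_assoc] at ham
  rw [mul_assoc]
  rw [ham]
  field_simp
  ring

lemma Gf_nonneg_right (hp0 : 0 < p) (hp2 : p ≤ 1/2)
    (ham : 2 * a * Real.log (p/(1-p)) = p - 1/2) (ha0 : p * (1-p) ≤ 2*a) :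
    ∀ s, Real.log (p/(1-p)) ≤ s → 0 ≤ Gf p a s := by
  have hp1 : p < 1 := by linarith
  set m := Real.log (p/(1-p)) with hm
  have hq : (0:ℝ) < 1 - p := by linarith
  have hm0 : m ≤ 0 := Real.log_nonpos (le_of_lt (div_pos hp0 hq))
    (by rw [div_le_one hq]; linarith)
  have hGd_cont : ∀ (D : Set ℝ), ContinuousOn (Gd p a) D :=
    fun D x _ => (hasDerivAt_Gd hp0 hp1 x).differentiableAt.continuousAt.continuousWithinAt
  have hGd_diff : ∀ (D : Set ℝ), DifferentiableOn ℝ (Gd p a) D :=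
    fun D x _ => (hasDerivAt_Gd hp0 hp1 x).differentiableAt.differentiableWithinAt
  have hGf_cont : ∀ (D : Set ℝ), ContinuousOn (Gf p a) D :=
    fun D x _ => (hasDerivAt_Gf hp0 hp1 x).differentiableAt.continuousAt.continuousWithinAt
  have hGf_diff : ∀ (D : Set ℝ), DifferentiableOn ℝ (Gf p a) D :=
    fun D x _ => (hasDerivAt_Gf hp0 hp1 x).differentiableAt.differentiableWithinAt
  -- Gd is nonnegative on [0, ∞)
  have hGd_nonneg : ∀ x, 0 ≤ x → 0 ≤ Gd p a x := by
    intro x hx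
    have hmono : MonotoneOn (Gd p a) (Set.Ici 0) := by
      apply monotoneOn_of_deriv_nonneg (convex_Ici 0) (hGd_cont _) (hGd_diff _)
      intro y hy
      rw [interior_Ici] at hy
      rw [(hasDerivAt_Gd hp0 hp1 y).deriv]
      have h1 : Gdd p a 0 ≤ Gdd p a y :=
        Gdd_mono hp0 hp1 (Set.mem_Ici.mpr hm0) (Set.mem_Ici.mpr (le_trans hm0 (le_of_lt hy)))
          (le_of_lt hy)
      rw [Gdd_zero] at h1
      linarith
    have := hmono (Set.mem_Ici.mpr le_rfl) (Set.mem_Ici.mpr hx) hx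
    rw [Gd_zero] at this
    exact this
  -- Gd is nonpositive on [m, 0]
  have hGd_nonpos : ∀ x, m ≤ x → x ≤ 0 → Gd p a x ≤ 0 := by
    intro x hmx hx0
    rcases le_or_gt (Gdd p a x) 0 with hW | hW
    · have hanti : AntitoneOn (Gd p a) (Set.Icc m x) := by
        apply antitoneOn_of_deriv_nonpos (convex_Icc m x) (hGd_cont _) (hGd_diff _)
        intro y hy
        rw [interior_Icc] at hy
        rw [(hasDerivAt_Gd hp0 hp1 y).deriv]
        exact le_trans (Gdd_mono hp0 hp1 (Set.mem_Ici.mpr (le_of_lt hy.1))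
          (Set.mem_Ici.mpr hmx) (le_of_lt hy.2)) hW
      have := hanti (Set.mem_Icc.mpr ⟨le_rfl, hmx⟩) (Set.mem_Icc.mpr ⟨hmx, le_rfl⟩) hmx
      rw [Gd_at_m hp0 hp1 ham] at this
      exact this
    · have hmono : MonotoneOn (Gd p a) (Set.Icc x 0) := by
        apply monotoneOn_of_deriv_nonneg (convex_Icc x 0) (hGd_cont _) (hGd_diff _)
        intro y hy
        rw [interior_Icc] at hy
        rw [(hasDerivAt_Gd hp0 hp1 y).deriv]
        exact le_of_lt (lt_of_lt_of_le hW
          (Gdd_mono hp0 hp1 (Set.mem_Ici.mpr hmx)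
            (Set.mem_Ici.mpr (le_trans hmx (le_of_lt hy.1))) (le_of_lt hy.1)))
      have := hmono (Set.mem_Icc.mpr ⟨le_rfl, hx0⟩) (Set.mem_Icc.mpr ⟨hx0, le_rfl⟩) hx0
      rw [Gd_zero] at this
      exact this
  intro s hs
  rcases le_total s 0 with h | h
  · have hanti : AntitoneOn (Gf p a) (Set.Icc m 0) := by
      apply antitoneOn_of_deriv_nonpos (convex_Icc m 0) (hGf_cont _) (hGf_diff _)
      intro y hy
      rw [interior_Icc] at hy
      rw [(hasDerivAt_Gf hp0 hp1 y).deriv]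
      exact hGd_nonpos y (le_of_lt hy.1) (le_of_lt hy.2)
    have := hanti (Set.mem_Icc.mpr ⟨hs, h⟩) (Set.mem_Icc.mpr ⟨hm0, le_rfl⟩) h
    rw [Gf_zero] at this
    exact this
  · have hmono : MonotoneOn (Gf p a) (Set.Ici 0) := by
      apply monotoneOn_of_deriv_nonneg (convex_Ici 0) (hGf_cont _) (hGf_diff _)
      intro y hy
      rw [interior_Ici] at hy
      rw [(hasDerivAt_Gf hp0 hp1 y).deriv]
      exact hGd_nonneg y (le_of_lt hy)
    have := hmono (Set.mem_Ici.mpr le_rfl) (Set.mem_Ici.mpr h) h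
    rw [Gf_zero] at this
    exact this

lemma Gf_reflect (hp0 : 0 < p) (hp1 : p < 1)
    (ham : 2 * a * Real.log (p/(1-p)) = p - 1/2) (s : ℝ) :
    Gf p a (2 * Real.log (p/(1-p)) - s) = Gf p a s := by
  have hq : (0:ℝ) < 1-p := by linarith
  have hpq : 0 < p/(1-p) := div_pos hp0 hq
  have hden := den_pos hp0 hp1 s
  have hkey : p + (1-p) * Real.exp (2*Real.log (p/(1-p)) - s)
      = (p/(1-p)) * Real.exp (-s) * (p + (1-p)*Real.exp s) := by
    have e1 : Real.exp (2*Real.log (p/(1-p)) - s)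
        = (p/(1-p)) * ((p/(1-p)) * Real.exp (-s)) := by
      rw [show 2*Real.log (p/(1-p)) - s = Real.log (p/(1-p)) + (Real.log (p/(1-p)) + -s) by ring,
        Real.exp_add, Real.exp_add, Real.exp_log hpq]
    rw [e1, Real.exp_neg]
    field_simp
    ring
  unfold Gf
  rw [hkey, Real.log_mul (by positivity) (ne_of_gt hden),
    Real.log_mul (ne_of_gt hpq) (Real.exp_ne_zero _), Real.log_exp]
  linear_combination (2*Real.log (p/(1-p)) - 2*s) * ham

lemma Gf_swap (hp0 : 0 < p) (hp1 : p < 1) (s : ℝ) : Gf (1-p) a (-s) = Gf p a s := by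
  unfold Gf
  have hden := den_pos hp0 hp1 s
  have e0 : (1 - (1-p)) = p := by ring
  rw [e0]
  have hkey : (1-p) + p * Real.exp (-s) = Real.exp (-s) * (p + (1-p)*Real.exp s) := by
    rw [Real.exp_neg]
    field_simp
    ring
  rw [hkey, Real.log_mul (Real.exp_ne_zero _) (ne_of_gt hden), Real.log_exp]
  ring

theorem Gf_nonneg (hp0 : 0 < p) (hp1 : p < 1) (s : ℝ) :
    0 ≤ Gf p (kearnsSaulPhi p / 4) s := by
  have aux : ∀ x : ℝ, 0 < x → x ≤ 1/2 → ∀ u : ℝ, 0 ≤ Gf x (kearnsSaulPhi x / 4) u := by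
    intro x hx0 hx2 u
    have hx1 : x < 1 := by linarith
    have ham : 2 * (kearnsSaulPhi x / 4) * Real.log (x/(1-x)) = x - 1/2 := by
      have h := phi_mul_log hx0 hx1
      have e : Real.log (x/(1-x)) = -Real.log ((1-x)/x) := by
        rw [← Real.log_inv, inv_div]
      rw [e]
      linear_combination (-(1:ℝ)/2) * h
    have ha0 : x * (1-x) ≤ 2 * (kearnsSaulPhi x / 4) := by
      have := phi_ge_2pq hx0 hx1
      linarith
    rcases le_or_gt (Real.log (x/(1-x))) u with h | h
    · exact Gf_nonneg_right hx0 hx2 ham ha0 u h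
    · rw [← Gf_reflect hx0 hx1 ham u]
      exact Gf_nonneg_right hx0 hx2 ham ha0 _ (by linarith)
  rcases le_or_gt p (1/2) with h | h
  · exact aux p hp0 h s
  · have h2 := aux (1-p) (by linarith) (by linarith) (-s)
    rw [phi_symm hp0 hp1] at h2
    rwa [Gf_swap hp0 hp1 s] at h2

theorem mgf_bound (hp0 : 0 < p) (hp1 : p < 1) (c : ℝ) :
    p * Real.exp (c * (0 - (1-p))) + (1-p) * Real.exp (c * (1 - (1-p))) ≤
      Real.exp (c^2 * kearnsSaulPhi p / 4) := by
  have h := Gf_nonneg hp0 hp1 c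
  unfold Gf at h
  set a := kearnsSaulPhi p / 4 with ha
  have hden := den_pos hp0 hp1 c
  have h2 : p + (1-p)*Real.exp c ≤ Real.exp (a*c^2 + c*(1-p)) := by
    rw [← Real.exp_log hden]
    exact Real.exp_le_exp.mpr (by linarith)
  have e1 : p * Real.exp (c*(0-(1-p))) + (1-p)*Real.exp (c*(1-(1-p)))
      = (p + (1-p)*Real.exp c) * Real.exp (-(c*(1-p))) := by
    rw [show c*(0-(1-p)) = -(c*(1-p)) by ring,
      show c*(1-(1-p)) = c + -(c*(1-p)) by ring, Real.exp_add]
    ring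
  rw [e1]
  calc (p + (1-p)*Real.exp c) * Real.exp (-(c*(1-p)))
      ≤ Real.exp (a*c^2 + c*(1-p)) * Real.exp (-(c*(1-p))) :=
        mul_le_mul_of_nonneg_right h2 (le_of_lt (Real.exp_pos _))
  _ = Real.exp (c^2 * kearnsSaulPhi p / 4) := by
      rw [← Real.exp_add]
      congr 1
      rw [ha]
      ring

open MeasureTheory ProbabilityTheory

variable {Ω : Type*} [MeasurableSpace Ω] {μ : Measure Ω} [IsProbabilityMeasure μ]

lemma ae_mem (hp0 : 0 < p) (hp1 : p < 1) {X : Ω → ℝ} (hX : Measurable X)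
    (h1 : μ {ω | X ω = 1} = ENNReal.ofReal (1 - p))
    (h0 : μ {ω | X ω = 0} = ENNReal.ofReal p) :
    ∀ᵐ ω ∂μ, X ω = 1 ∨ X ω = 0 := by
  have hA : MeasurableSet {ω | X ω = 1} := hX (measurableSet_singleton 1)
  have hB : MeasurableSet {ω | X ω = 0} := hX (measurableSet_singleton 0)
  have hdisj : Disjoint {ω | X ω = 1} {ω | X ω = 0} := by
    rw [Set.disjoint_left]
    intro ω hω1 hω0
    simp only [Set.mem_setOf_eq] at hω1 hω0
    rw [hω1] at hω0
    exact one_ne_zero hω0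
  have hU : μ ({ω | X ω = 1} ∪ {ω | X ω = 0}) = 1 := by
    rw [measure_union hdisj hB, h1, h0, ← ENNReal.ofReal_add (by linarith) (by linarith)]
    norm_num
  have hC : μ ({ω | X ω = 1} ∪ {ω | X ω = 0})ᶜ = 0 := by
    rw [measure_compl (hA.union hB) (measure_ne_top μ _), hU, measure_univ]
    simp
  rw [MeasureTheory.ae_iff]
  have he : {ω | ¬(X ω = 1 ∨ X ω = 0)} = ({ω | X ω = 1} ∪ {ω | X ω = 0})ᶜ := by
    ext ω
    simp [not_or]
  rw [he]
  exact hC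

lemma mgf_bern_eq (hp0 : 0 < p) (hp1 : p < 1) {X : Ω → ℝ} (hX : Measurable X)
    (h1 : μ {ω | X ω = 1} = ENNReal.ofReal (1 - p))
    (h0 : μ {ω | X ω = 0} = ENNReal.ofReal p) (b c : ℝ) :
    mgf (fun ω => b * (X ω - (1 - p))) μ c
      = p * Real.exp ((c*b) * (0 - (1-p))) + (1-p) * Real.exp ((c*b) * (1 - (1-p))) := by
  have hA : MeasurableSet {ω | X ω = 1} := hX (measurableSet_singleton 1)
  have hB : MeasurableSet {ω | X ω = 0} := hX (measurableSet_singleton 0)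
  unfold mgf
  have hae := ae_mem hp0 hp1 hX h1 h0 (μ := μ)
  have hcong : (fun ω => Real.exp (c * (b * (X ω - (1-p))))) =ᵐ[μ]
      (fun ω => Set.indicator {ω | X ω = 0} (fun _ => Real.exp ((c*b)*(0-(1-p)))) ω
        + Set.indicator {ω | X ω = 1} (fun _ => Real.exp ((c*b)*(1-(1-p)))) ω) := by
    filter_upwards [hae] with ω hω
    rcases hω with h | h
    · rw [Set.indicator_of_notMem (by simp [h]), Set.indicator_of_mem (by simp [h] : ω ∈ _)]
      rw [h]
      rw [zero_add]
      ring_nf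
    · rw [Set.indicator_of_mem (by simp [h] : ω ∈ _), Set.indicator_of_notMem (by simp [h])]
      rw [h]
      rw [add_zero]
      ring_nf
  rw [integral_congr_ae hcong, integral_add ((integrable_const _).indicator hB)
    ((integrable_const _).indicator hA), integral_indicator_const _ hB,
    integral_indicator_const _ hA, measureReal_def, measureReal_def, h0, h1, ENNReal.toReal_ofReal (le_of_lt hp0),
    ENNReal.toReal_ofReal (by linarith : (0:ℝ) ≤ 1 - p)]
  simp only [smul_eq_mul]

lemma integrable_exp_bern (hp0 : 0 < p) (hp1 : p < 1) {X : Ω → ℝ} (hX : Measurable X)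
    (h1 : μ {ω | X ω = 1} = ENNReal.ofReal (1 - p))
    (h0 : μ {ω | X ω = 0} = ENNReal.ofReal p) (b c : ℝ) :
    Integrable (fun ω => Real.exp (c * (b * (X ω - (1 - p))))) μ := by
  apply Integrable.mono' (integrable_const
    (max (Real.exp (c * (b * (0 - (1-p))))) (Real.exp (c * (b * (1 - (1-p)))))))
  · exact (Real.measurable_exp.comp
      (((hX.sub measurable_const).const_mul b).const_mul c)).aestronglyMeasurable
  · filter_upwards [ae_mem hp0 hp1 hX h1 h0 (μ := μ)] with ω hω
    rw [Real.norm_eq_abs, abs_of_pos (Real.exp_pos _)]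
    rcases hω with h | h
    · rw [h]; exact le_max_right _ _
    · rw [h]; exact le_max_left _ _

lemma mgf_bern_le (hp0 : 0 < p) (hp1 : p < 1) {X : Ω → ℝ} (hX : Measurable X)
    (h1 : μ {ω | X ω = 1} = ENNReal.ofReal (1 - p))
    (h0 : μ {ω | X ω = 0} = ENNReal.ofReal p) (b c : ℝ) :
    mgf (fun ω => b * (X ω - (1 - p))) μ c ≤
      Real.exp ((c*b)^2 * kearnsSaulPhi p / 4) := by
  rw [mgf_bern_eq hp0 hp1 hX h1 h0 b c]
  exact mgf_bound hp0 hp1 (c*b)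

lemma one_side {n : ℕ} (p : Fin n → ℝ) (hp : ∀ j, p j ∈ Set.Ioo (0 : ℝ) 1)
    (R : Fin n → Ω → ℝ) (hR : ∀ j, Measurable (R j))
    (hindep : iIndepFun R μ)
    (h1 : ∀ j, μ {ω | R j ω = 1} = ENNReal.ofReal (1 - p j))
    (h0 : ∀ j, μ {ω | R j ω = 0} = ENNReal.ofReal (p j))
    (β : Fin n → ℝ) (t : ℝ) (ht : 0 < t)
    (hχ : 0 < ∑ j, (β j)^2 * kearnsSaulPhi (p j)) :
    (μ {ω | t ≤ ∑ j, β j * (R j ω - (1 - p j))}).toReal ≤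
      Real.exp (-t^2 / ∑ j, (β j)^2 * kearnsSaulPhi (p j)) := by
  set χ := ∑ j, (β j)^2 * kearnsSaulPhi (p j) with hχdef
  set lam := 2*t/χ with hlamdef
  have hlam : 0 ≤ lam := by positivity
  set Y : Fin n → Ω → ℝ := fun j => (fun x => β j * (x - (1 - p j))) ∘ R j with hY
  have hYmeas : ∀ j, Measurable (Y j) :=
    fun j => ((measurable_id.sub_const _).const_mul _).comp (hR j)
  have hYindep : iIndepFun Y μ :=
    hindep.comp _ (fun j => ((measurable_id.sub_const _).const_mul (β j)))
  have hint : ∀ j, Integrable (fun ω => Real.exp (lam * Y j ω)) μ := fun j =>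
    integrable_exp_bern (hp j).1 (hp j).2 (hR j) (h1 j) (h0 j) (β j) lam
  have hZint : Integrable (fun ω => Real.exp (lam * (∑ j, Y j) ω)) μ :=
    hYindep.integrable_exp_mul_sum hYmeas (fun j _ => hint j)
  have hch := measure_ge_le_exp_mul_mgf (μ := μ) (X := ∑ j, Y j) t hlam hZint
  have hseteq : {ω | t ≤ (∑ j, Y j) ω} = {ω | t ≤ ∑ j, β j * (R j ω - (1 - p j))} := by
    ext ω
    simp [hY, Finset.sum_apply]
  rw [hseteq] at hch
  have hmgf : mgf (∑ j, Y j) μ lam ≤ Real.exp (lam^2 * χ / 4) := by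
    rw [hYindep.mgf_sum hYmeas]
    calc ∏ j, mgf (Y j) μ lam
        ≤ ∏ j, Real.exp ((lam * β j)^2 * kearnsSaulPhi (p j) / 4) :=
          Finset.prod_le_prod (fun j _ => mgf_nonneg)
            (fun j _ => mgf_bern_le (hp j).1 (hp j).2 (hR j) (h1 j) (h0 j) (β j) lam)
    _ = Real.exp (∑ j, (lam * β j)^2 * kearnsSaulPhi (p j) / 4) := (Real.exp_sum _ _).symm
    _ = Real.exp (lam^2 * χ / 4) := by
          congr 1
          rw [hχdef, Finset.mul_sum, Finset.sum_div]
          exact Finset.sum_congr rfl (fun j _ => by ring)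
  have hχne : χ ≠ 0 := ne_of_gt hχ
  calc (μ {ω | t ≤ ∑ j, β j * (R j ω - (1 - p j))}).toReal
      ≤ Real.exp (-lam * t) * mgf (∑ j, Y j) μ lam := hch
  _ ≤ Real.exp (-lam * t) * Real.exp (lam^2 * χ / 4) :=
      mul_le_mul_of_nonneg_left hmgf (le_of_lt (Real.exp_pos _))
  _ = Real.exp (-lam * t + lam^2 * χ / 4) := (Real.exp_add _ _).symm
  _ = Real.exp (-t^2 / χ) := by
      congr 1
      rw [hlamdef]
      field_simp
      ring

end KS

theorem kearnsSaul_concentration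
    {Ω : Type*} [MeasurableSpace Ω] (μ : Measure Ω) [IsProbabilityMeasure μ]
    (n : ℕ) (p : Fin n → ℝ) (hp : ∀ j, p j ∈ Set.Ioo (0 : ℝ) 1)
    (R : Fin n → Ω → ℝ) (hR : ∀ j, Measurable (R j))
    (hindep : iIndepFun R μ)
    (h1 : ∀ j, μ {ω | R j ω = 1} = ENNReal.ofReal (1 - p j))
    (h0 : ∀ j, μ {ω | R j ω = 0} = ENNReal.ofReal (p j))
    (α : Fin n → ℝ) :
    ∀ t : ℝ, 0 < t →
      μ {ω | t < |∑ j, α j * (R j ω - (1 - p j))|} ≤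
        ENNReal.ofReal (2 * Real.exp (-t ^ 2 / ∑ j, (α j) ^ 2 * kearnsSaulPhi (p j))) := by
  intro t ht
  by_cases hχ : 0 < ∑ j, (α j)^2 * kearnsSaulPhi (p j)
  · have hneg : ∑ j, (-α j)^2 * kearnsSaulPhi (p j) = ∑ j, (α j)^2 * kearnsSaulPhi (p j) := by
      simp [neg_sq]
    have hB1 := KS.one_side (μ := μ) p hp R hR hindep h1 h0 α t ht hχ
    have hB2 := KS.one_side (μ := μ) p hp R hR hindep h1 h0 (fun j => -α j) t ht
      (by rw [hneg]; exact hχ)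
    rw [hneg] at hB2
    have hsub : {ω | t < |∑ j, α j * (R j ω - (1 - p j))|} ⊆
        {ω | t ≤ ∑ j, α j * (R j ω - (1 - p j))} ∪
        {ω | t ≤ ∑ j, (fun j => -α j) j * (R j ω - (1 - p j))} := by
      intro ω hω
      simp only [Set.mem_setOf_eq] at hω
      rcases le_abs.mp (le_of_lt hω) with h | h
      · exact Or.inl h
      · right
        simp only [Set.mem_setOf_eq]
        calc t ≤ -∑ j, α j * (R j ω - (1 - p j)) := h
        _ = ∑ j, -α j * (R j ω - (1 - p j)) := by
            rw [← Finset.sum_neg_distrib]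
            exact Finset.sum_congr rfl (fun j _ => by ring)
    have hexp : (0:ℝ) ≤ Real.exp (-t^2 / ∑ j, (α j)^2 * kearnsSaulPhi (p j)) :=
      le_of_lt (Real.exp_pos _)
    calc μ {ω | t < |∑ j, α j * (R j ω - (1 - p j))|}
        ≤ μ ({ω | t ≤ ∑ j, α j * (R j ω - (1 - p j))} ∪
            {ω | t ≤ ∑ j, (fun j => -α j) j * (R j ω - (1 - p j))}) := measure_mono hsub
    _ ≤ μ {ω | t ≤ ∑ j, α j * (R j ω - (1 - p j))} +
          μ {ω | t ≤ ∑ j, (fun j => -α j) j * (R j ω - (1 - p j))} := measure_union_le _ _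
    _ ≤ ENNReal.ofReal (Real.exp (-t^2 / ∑ j, (α j)^2 * kearnsSaulPhi (p j))) +
          ENNReal.ofReal (Real.exp (-t^2 / ∑ j, (α j)^2 * kearnsSaulPhi (p j))) := by
        gcongr
        · rw [← ENNReal.ofReal_toReal (measure_ne_top μ _)]
          exact ENNReal.ofReal_le_ofReal hB1
        · rw [← ENNReal.ofReal_toReal (measure_ne_top μ _)]
          exact ENNReal.ofReal_le_ofReal hB2
    _ = ENNReal.ofReal (2 * Real.exp (-t ^ 2 / ∑ j, (α j) ^ 2 * kearnsSaulPhi (p j))) := by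
        rw [← ENNReal.ofReal_add hexp hexp]
        congr 1
        ring
  · have hall : ∀ j, α j = 0 := by
      have hterm : ∀ j ∈ Finset.univ, (0:ℝ) ≤ (α j)^2 * kearnsSaulPhi (p j) := fun j _ =>
        mul_nonneg (sq_nonneg _) (le_of_lt (KS.phi_pos (hp j).1 (hp j).2))
      have hsum0 : ∑ j, (α j)^2 * kearnsSaulPhi (p j) = 0 :=
        le_antisymm (not_lt.mp hχ) (Finset.sum_nonneg hterm)
      intro j
      have := (Finset.sum_eq_zero_iff_of_nonneg hterm).mp hsum0 j (Finset.mem_univ j)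
      have hφ := KS.phi_pos (hp j).1 (hp j).2
      have : (α j)^2 = 0 := by
        rcases mul_eq_zero.mp this with h | h
        · exact h
        · exact absurd h (ne_of_gt hφ)
      exact pow_eq_zero_iff (by norm_num) |>.mp this
    have hempty : {ω | t < |∑ j, α j * (R j ω - (1 - p j))|} = ∅ := by
      ext ω
      simp [hall]
      linarith
    rw [hempty]
    simp
end

section
/- Let δ_1,…,δ_n be i.i.d. Bernoulli(1-p) with p ∈ (0,1)\{1/2}, c_1,…,c_n real constants, and h = Σ_j (1 - δ_j/(1-p)) c_j. Then for every γ ∈ (0,1), with probability at least 1-γ, |h| ≤ (√Φ(p)/(1-p)) · √(Σ_j c_j²) · √(log(2/γ)), where Φ(p) = (1-2p)/log((1-p)/p). -/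
open MeasureTheory ProbabilityTheory Real Set

lemma KS_log_lt {x : ℝ} (hx : 1 < x) : Real.log x < (x^2 - 1)/(2*x) := by
  have hx0 : (0:ℝ) < x := by linarith
  have h := (Real.self_lt_sinh_iff (x := Real.log x)).2 (Real.log_pos hx)
  rw [Real.sinh_eq, Real.exp_log hx0, Real.exp_neg, Real.exp_log hx0] at h
  calc Real.log x < (x - x⁻¹)/2 := h
    _ = (x^2 - 1)/(2*x) := by field_simp

lemma KS_log_gt {x : ℝ} (hx : 1 < x) : 2*(x-1)/(x+1) < Real.log x := by
  have hx0 : (0:ℝ) < x := by linarith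
  set f : ℝ → ℝ := fun y => Real.log y - 2*(y-1)/(y+1) with hf
  have key : StrictMonoOn f (Set.Ici 1) := by
    apply strictMonoOn_of_deriv_pos (convex_Ici 1)
    · apply ContinuousOn.sub (Real.continuousOn_log.mono (by intro y hy; simp at hy ⊢; intro h; linarith))
      apply ContinuousOn.div (by fun_prop) (by fun_prop)
      intro y hy; simp at hy; positivity
    · intro y hy
      rw [interior_Ici] at hy
      have hy1 : (1:ℝ) < y := hy
      have hy0 : (0:ℝ) < y := by linarith
      have hd : HasDerivAt f (1/y - 4/(y+1)^2) y := by
        have h1 : HasDerivAt Real.log (1/y) y := by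
          simpa using Real.hasDerivAt_log (ne_of_gt hy0)
        have h2 : HasDerivAt (fun y : ℝ => 2*(y-1)/(y+1)) (4/(y+1)^2) y := by
          have ha : HasDerivAt (fun y : ℝ => 2*(y-1)) 2 y := by
            simpa using ((hasDerivAt_id y).sub_const 1).const_mul 2
          have hb : HasDerivAt (fun y : ℝ => y+1) 1 y := (hasDerivAt_id y).add_const 1
          have := ha.div hb (by positivity)
          refine this.congr_deriv ?_
          ring
        exact h1.sub h2
      rw [hd.deriv]
      rw [div_sub_div _ _ (ne_of_gt hy0) (by positivity), lt_div_iff₀ (by positivity)]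
      nlinarith
  have := key (Set.self_mem_Ici) (le_of_lt hx : (1:ℝ) ≤ x) hx
  simp [hf] at this
  linarith

set_option maxHeartbeats 1000000 in
lemma KS_half {q : ℝ} (hq0 : 0 < q) (hq2 : q < 1/2) (t : ℝ) :
    Real.log (1 - q + q * Real.exp t) - q * t ≤
      (1-2*q)/(4*Real.log ((1-q)/q)) * t^2 := by
  have hq1 : q < 1 := by linarith
  set x : ℝ := (1-q)/q with hxdef
  have hx : 1 < x := by rw [hxdef, lt_div_iff₀ hq0]; linarith
  set L : ℝ := Real.log x with hLdef
  have hL : 0 < L := Real.log_pos hx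
  set K : ℝ := (1-2*q)/(4*L) with hKdef
  have hK : 0 < K := by apply div_pos (by linarith) (by linarith)
  set den : ℝ → ℝ := fun t => 1 - q + q * Real.exp t with hdendef
  have hden : ∀ t, 0 < den t := fun t => by
    have := Real.exp_pos t; simp only [hdendef]; nlinarith
  set s : ℝ → ℝ := fun t => q * Real.exp t / den t with hsdef
  have hspos : ∀ t, 0 < s t := fun t => by
    have := Real.exp_pos t
    exact div_pos (by positivity) (hden t)
  have hslt1 : ∀ t, s t < 1 := fun t => by
    rw [hsdef]; rw [div_lt_one (hden t)]; simp only [hdendef]; linarith [Real.exp_pos t]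
  have hden' : ∀ u, HasDerivAt den (q * Real.exp u) u := fun u => by
    exact ((Real.hasDerivAt_exp u).const_mul q).const_add (1-q)
  have hs' : ∀ u, HasDerivAt s (s u * (1 - s u)) u := fun u => by
    have h1 : HasDerivAt (fun t => q * Real.exp t) (q * Real.exp u) u :=
      (Real.hasDerivAt_exp u).const_mul q
    have := h1.div (hden' u) (ne_of_gt (hden u))
    refine this.congr_deriv ?_
    symm
    have hd := hden u
    have h1s : 1 - s u = (1-q)/den u := by
      rw [hsdef]; field_simp; simp only [hdendef]; ring
    rw [h1s, hsdef]
    field_simp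
    simp only [hdendef]; ring
  -- exp values
  have hexpL : Real.exp L = x := Real.exp_log (by linarith)
  have hexp2L : Real.exp (2*L) = x^2 := by
    rw [two_mul, Real.exp_add, hexpL]; ring
  have hqx : q * x = 1 - q := by rw [hxdef]; field_simp
  -- s values
  have hs0 : s 0 = q := by simp [hsdef, hdendef]
  have hsL : s L = 1/2 := by
    rw [hsdef]; simp only [hdendef, hexpL, hqx]
    rw [div_eq_iff (by nlinarith : (1:ℝ) - q + (1 - q) ≠ 0)]; ring
  have hs2L : s (2*L) = 1 - q := by
    have hden2L : den (2*L) = (1-q)/q := by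
      simp only [hdendef, hexp2L]
      field_simp
      nlinarith
    rw [hsdef]
    simp only [hexp2L, hden2L]
    rw [div_eq_iff (by positivity : (1-q)/q ≠ 0), hxdef]
    field_simp
  -- second derivative function
  set G2 : ℝ → ℝ := fun u => 2*K - s u * (1 - s u) with hG2def
  have hsmono : StrictMono s := by
    apply strictMono_of_deriv_pos
    intro u
    rw [(hs' u).deriv]
    have := hspos u; have := hslt1 u; nlinarith
  have hG2anti : AntitoneOn G2 (Iic L) := by
    intro t1 h1 t2 h2 h12
    simp only [hG2def]
    have e1 : s t1 ≤ s t2 := hsmono.monotone h12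
    have e2 : s t2 ≤ 1/2 := hsL ▸ hsmono.monotone (h2 : t2 ≤ L)
    have := hspos t1
    nlinarith
  have hG2mono : MonotoneOn G2 (Ici L) := by
    intro t1 h1 t2 h2 h12
    simp only [hG2def]
    have e1 : s t1 ≤ s t2 := hsmono.monotone h12
    have e2 : 1/2 ≤ s t1 := hsL ▸ hsmono.monotone (h1 : L ≤ t1)
    have := hslt1 t2
    nlinarith
  -- values of G2
  have hqq : (0:ℝ) < 2*q*(1-q) := by nlinarith
  have h2L : (0:ℝ) < 2*L := by linarith
  have hKL : 2*K*(2*L) = 1-2*q := by rw [hKdef]; field_simp; ring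
  have hxform : (x^2-1)/(2*x) = (1-2*q)/(2*q*(1-q)) := by
    rw [div_eq_div_iff (by rw [hxdef]; positivity) hqq.ne', hxdef]
    field_simp; ring
  have hA : L < (1-2*q)/(2*q*(1-q)) := hxform ▸ (hLdef ▸ KS_log_lt hx)
  have hB : 2*(1-2*q) < L := by
    have := KS_log_gt hx
    have hxform2 : 2*(x-1)/(x+1) = 2*(1-2*q) := by
      rw [hxdef]; field_simp; ring
    rw [hxform2] at this; exact this
  have hG20 : 0 < G2 0 := by
    simp only [hG2def, hs0]
    have h2K : q*(1-q) < 2*K := by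
      have hA' : (q*(1-q))*(2*L) < 2*K*(2*L) := by
        rw [lt_div_iff₀ hqq] at hA; rw [hKL]; nlinarith
      exact lt_of_mul_lt_mul_right hA' (le_of_lt h2L)
    linarith
  have hG2L : G2 L < 0 := by
    simp only [hG2def, hsL]
    have h2K : 2*K < 1/4 := by
      have hB' : 2*K*(2*L) < (1/4)*(2*L) := by rw [hKL]; linarith
      exact lt_of_mul_lt_mul_right hB' (le_of_lt h2L)
    nlinarith
  have hG22L : 0 < G2 (2*L) := by
    simp only [hG2def, hs2L]
    have h2K : q*(1-q) < 2*K := by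
      have hA' : (q*(1-q))*(2*L) < 2*K*(2*L) := by
        rw [lt_div_iff₀ hqq] at hA; rw [hKL]; nlinarith
      exact lt_of_mul_lt_mul_right hA' (le_of_lt h2L)
    nlinarith
  have hsdiff : Differentiable ℝ s := fun u => (hs' u).differentiableAt
  have hscont : Continuous s := hsdiff.continuous
  have hG2cont : Continuous G2 := by
    rw [hG2def]; fun_prop
  -- G1 and G0
  set G1 : ℝ → ℝ := fun u => 2*K*u - (s u - q) with hG1def
  set G0 : ℝ → ℝ := fun u => K*u^2 - (Real.log (den u) - q*u) with hG0def
  have hG1' : ∀ u, HasDerivAt G1 (G2 u) u := fun u => by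
    have h1 : HasDerivAt (fun u : ℝ => 2*K*u) (2*K) u := by
      simpa using (hasDerivAt_id u).const_mul (2*K)
    have h2 : HasDerivAt (fun u => s u - q) (s u * (1 - s u)) u := (hs' u).sub_const q
    exact h1.sub h2
  have hG0' : ∀ u, HasDerivAt G0 (G1 u) u := fun u => by
    have h1 : HasDerivAt (fun u : ℝ => K*u^2) (2*K*u) u := by
      have := (hasDerivAt_pow 2 u).const_mul K
      refine this.congr_deriv ?_; ring
    have h2 : HasDerivAt (fun u => Real.log (den u) - q*u) (s u - q) u := by
      have hlog : HasDerivAt (fun u => Real.log (den u)) (q * Real.exp u / den u) u :=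
        (hden' u).log (ne_of_gt (hden u))
      have hq' : HasDerivAt (fun u : ℝ => q*u) q u := by
        simpa using (hasDerivAt_id u).const_mul q
      exact hlog.sub hq'
    exact h1.sub h2
  have hG1diff : Differentiable ℝ G1 := fun u => (hG1' u).differentiableAt
  have hG0diff : Differentiable ℝ G0 := fun u => (hG0' u).differentiableAt
  have hG1deriv : deriv G1 = G2 := funext fun u => (hG1' u).deriv
  have hG0deriv : deriv G0 = G1 := funext fun u => (hG0' u).deriv
  -- values
  have hG10 : G1 0 = 0 := by simp [hG1def, hs0]
  have hG12L : G1 (2*L) = 0 := by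
    simp only [hG1def, hs2L]
    have : 2*K*(2*L) = 1-2*q := hKL
    linarith
  have hG00 : G0 0 = 0 := by simp [hG0def, hdendef]
  have hG02L : G0 (2*L) = 0 := by
    have hden2L : den (2*L) = x := by
      simp only [hdendef, hexp2L, hxdef]
      field_simp; ring
    simp only [hG0def, hden2L, ← hLdef]
    have : 2*K*(2*L) = 1-2*q := hKL
    nlinarith
  -- IVT for tm and tp
  obtain ⟨tm, htm, htmval⟩ := intermediate_value_Icc' (le_of_lt hL) hG2cont.continuousOn
    (⟨le_of_lt hG2L, le_of_lt hG20⟩ : (0:ℝ) ∈ Icc (G2 L) (G2 0))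
  obtain ⟨tp, htp, htpval⟩ := intermediate_value_Icc (by linarith : L ≤ 2*L) hG2cont.continuousOn
    (⟨le_of_lt hG2L, le_of_lt hG22L⟩ : (0:ℝ) ∈ Icc (G2 L) (G2 (2*L)))
  obtain ⟨htm0, htmL⟩ := htm
  obtain ⟨htpL, htp2L⟩ := htp
  -- G2 signs
  have hG2n1 : ∀ u ∈ Iic tm, 0 ≤ G2 u := fun u hu => by
    rw [← htmval]
    exact hG2anti (le_trans (hu : u ≤ tm) htmL) htmL hu
  have hG2n2 : ∀ u ∈ Icc tm tp, G2 u ≤ 0 := fun u hu => by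
    rcases le_total u L with h | h
    · rw [← htmval]; exact hG2anti htmL h hu.1
    · rw [← htpval]; exact hG2mono h htpL hu.2
  have hG2n3 : ∀ u ∈ Ici tp, 0 ≤ G2 u := fun u hu => by
    rw [← htpval]
    exact hG2mono htpL (le_trans htpL hu) hu
  -- G1 monotonicity
  have hM1 : MonotoneOn G1 (Iic tm) := by
    apply monotoneOn_of_deriv_nonneg (convex_Iic tm) hG1diff.continuous.continuousOn
      hG1diff.differentiableOn
    intro u hu
    rw [hG1deriv]
    exact hG2n1 u (le_of_lt (by simpa using hu))
  have hA1 : AntitoneOn G1 (Icc tm tp) := by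
    apply antitoneOn_of_deriv_nonpos (convex_Icc tm tp) hG1diff.continuous.continuousOn
      hG1diff.differentiableOn
    intro u hu
    rw [hG1deriv]
    rw [interior_Icc] at hu
    exact hG2n2 u ⟨le_of_lt hu.1, le_of_lt hu.2⟩
  have hM2 : MonotoneOn G1 (Ici tp) := by
    apply monotoneOn_of_deriv_nonneg (convex_Ici tp) hG1diff.continuous.continuousOn
      hG1diff.differentiableOn
    intro u hu
    rw [hG1deriv]
    exact hG2n3 u (le_of_lt (by simpa using hu))
  -- G1 signs at tm, tp
  have hG1tm : 0 ≤ G1 tm := hG10 ▸ hM1 (htm0.trans (le_refl tm) : (0:ℝ) ∈ Iic tm) (le_refl tm) htm0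
  have hG1tp : G1 tp ≤ 0 := hG12L ▸ hM2 (le_refl tp) (htp2L : tp ≤ 2*L) htp2L
  -- root r of G1 in [tm, tp]
  obtain ⟨r, hr, hrval⟩ := intermediate_value_Icc' (le_trans htmL htpL)
    hG1diff.continuous.continuousOn (⟨hG1tp, hG1tm⟩ : (0:ℝ) ∈ Icc (G1 tp) (G1 tm))
  obtain ⟨hrtm, hrtp⟩ := hr
  have hr0 : (0:ℝ) ≤ r := le_trans htm0 hrtm
  have hr2L : r ≤ 2*L := le_trans hrtp htp2L
  -- G1 signs
  have hG1s1 : ∀ u ∈ Iic (0:ℝ), G1 u ≤ 0 := fun u hu =>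
    hG10 ▸ hM1 (le_trans (hu : u ≤ 0) htm0) htm0 hu
  have hG1s2 : ∀ u ∈ Icc (0:ℝ) r, 0 ≤ G1 u := fun u hu => by
    rcases le_total u tm with h | h
    · exact hG10 ▸ hM1 (htm0 : (0:ℝ) ∈ Iic tm) h hu.1
    · rw [← hrval]; exact hA1 ⟨h, le_trans hu.2 hrtp⟩ ⟨hrtm, hrtp⟩ hu.2
  have hG1s3 : ∀ u ∈ Icc r (2*L), G1 u ≤ 0 := fun u hu => by
    rcases le_total u tp with h | h
    · rw [← hrval]; exact hA1 ⟨hrtm, hrtp⟩ ⟨le_trans hrtm hu.1, h⟩ hu.1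
    · exact hG12L ▸ hM2 (h : tp ≤ u) (le_trans h hu.2) hu.2
  have hG1s4 : ∀ u ∈ Ici (2*L), 0 ≤ G1 u := fun u hu =>
    hG12L ▸ hM2 (htp2L : (2*L) ∈ Ici tp) (le_trans htp2L hu) hu
  -- G0 monotonicity and conclusion
  have hA0a : AntitoneOn G0 (Iic (0:ℝ)) := by
    apply antitoneOn_of_deriv_nonpos (convex_Iic 0) hG0diff.continuous.continuousOn
      hG0diff.differentiableOn
    intro u hu; rw [hG0deriv]; exact hG1s1 u (le_of_lt (by simpa using hu))
  have hM0a : MonotoneOn G0 (Icc (0:ℝ) r) := by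
    apply monotoneOn_of_deriv_nonneg (convex_Icc 0 r) hG0diff.continuous.continuousOn
      hG0diff.differentiableOn
    intro u hu; rw [hG0deriv]; rw [interior_Icc] at hu
    exact hG1s2 u ⟨le_of_lt hu.1, le_of_lt hu.2⟩
  have hA0b : AntitoneOn G0 (Icc r (2*L)) := by
    apply antitoneOn_of_deriv_nonpos (convex_Icc r (2*L)) hG0diff.continuous.continuousOn
      hG0diff.differentiableOn
    intro u hu; rw [hG0deriv]; rw [interior_Icc] at hu
    exact hG1s3 u ⟨le_of_lt hu.1, le_of_lt hu.2⟩
  have hM0b : MonotoneOn G0 (Ici (2*L)) := by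
    apply monotoneOn_of_deriv_nonneg (convex_Ici (2*L)) hG0diff.continuous.continuousOn
      hG0diff.differentiableOn
    intro u hu; rw [hG0deriv]; exact hG1s4 u (le_of_lt (by simpa using hu))
  have hfinal : 0 ≤ G0 t := by
    rcases le_total t 0 with h | h
    · exact hG00 ▸ hA0a (h : t ∈ Iic (0:ℝ)) (le_refl (0:ℝ)) h
    · rcases le_total t r with h2 | h2
      · exact hG00 ▸ hM0a (⟨le_refl 0, hr0⟩ : (0:ℝ) ∈ Icc (0:ℝ) r) ⟨h, h2⟩ h
      · rcases le_total t (2*L) with h3 | h3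
        · exact hG02L ▸ hA0b ⟨h2, h3⟩ (⟨hr2L, le_refl _⟩ : (2*L) ∈ Icc r (2*L)) h3
        · exact hG02L ▸ hM0b (le_refl (2*L) : (2*L) ∈ Ici (2*L)) h3 h3
  simp only [hG0def, hdendef] at hfinal
  linarith

lemma KS_psi {q : ℝ} (hq0 : 0 < q) (hq1 : q < 1) (hq2 : q ≠ 1/2) (t : ℝ) :
    Real.log (1 - q + q * Real.exp t) - q * t ≤
      (1-2*q)/(4*Real.log ((1-q)/q)) * t^2 := by
  rcases lt_or_gt_of_ne hq2 with h | h
  · exact KS_half hq0 h t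
  · -- apply to q' = 1 - q, t' = -t
    have h' := KS_half (q := 1 - q) (by linarith) (by linarith) (-t)
    have e1 : 1 - (1-q) + (1-q) * Real.exp (-t) = Real.exp (-t) * (1 - q + q * Real.exp t) := by
      rw [Real.exp_neg]
      field_simp [Real.exp_ne_zero]
      ring
    have hpos : (0:ℝ) < 1 - q + q * Real.exp t := by nlinarith [Real.exp_pos t]
    rw [e1, Real.log_mul (Real.exp_ne_zero _) (ne_of_gt hpos), Real.log_exp] at h'
    have e2 : Real.log ((1-(1-q))/(1-q)) = - Real.log ((1-q)/q) := by
      rw [← Real.log_inv]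
      congr 1
      field_simp
      ring
    rw [e2] at h'
    have e3 : (1-2*(1-q))/(4*(-Real.log ((1-q)/q))) = (1-2*q)/(4*Real.log ((1-q)/q)) := by
      rw [show (4:ℝ)*(-Real.log ((1-q)/q)) = -(4*Real.log ((1-q)/q)) by ring, div_neg,
        show (1:ℝ)-2*(1-q) = -(1-2*q) by ring, neg_div, neg_neg]
    rw [e3, neg_sq] at h'
    linarith

lemma KS_exp {q : ℝ} (hq0 : 0 < q) (hq1 : q < 1) (hq2 : q ≠ 1/2) (t : ℝ) :
    q * Real.exp (t*(1-q)) + (1-q) * Real.exp (-(t*q)) ≤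
      Real.exp ((1-2*q)/(4*Real.log ((1-q)/q)) * t^2) := by
  have hpos : (0:ℝ) < 1 - q + q * Real.exp t := by nlinarith [Real.exp_pos t]
  have key := KS_psi hq0 hq1 hq2 t
  have e1 : q * Real.exp (t*(1-q)) + (1-q) * Real.exp (-(t*q)) =
      Real.exp (Real.log (1 - q + q * Real.exp t) - q * t) := by
    rw [Real.exp_sub, Real.exp_log hpos,
      show t*(1-q) = t - t*q by ring, Real.exp_sub,
      show -(t*q) = 0 - t*q by ring, Real.exp_sub, Real.exp_zero,
      show q*t = t*q by ring]
    field_simp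
    ring
  rw [e1]
  exact Real.exp_le_exp.2 key

lemma bern_integral {Ω : Type*} [MeasurableSpace Ω] (μ : Measure Ω) [IsProbabilityMeasure μ]
    {q : ℝ} (hq0 : 0 ≤ q) (hq1 : q ≤ 1) {Y : Ω → ℝ} (hY : Measurable Y)
    (h1 : μ {ω | Y ω = 1} = ENNReal.ofReal q) (h0 : μ {ω | Y ω = 0} = ENNReal.ofReal (1-q))
    (f : ℝ → ℝ) :
    Integrable (fun ω => f (Y ω)) μ ∧ ∫ ω, f (Y ω) ∂μ = q * f 1 + (1-q) * f 0 := by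
  have hA : MeasurableSet {ω | Y ω = 1} := hY (measurableSet_singleton 1)
  have hB : MeasurableSet {ω | Y ω = 0} := hY (measurableSet_singleton 0)
  have hdisj : Disjoint {ω | Y ω = 1} {ω | Y ω = 0} := by
    rw [Set.disjoint_iff]
    rintro ω ⟨ha, hb⟩
    simp only [mem_setOf_eq] at ha hb
    rw [ha] at hb; norm_num at hb
  have hunion : μ ({ω | Y ω = 1} ∪ {ω | Y ω = 0}) = 1 := by
    rw [measure_union hdisj hB, h1, h0, ← ENNReal.ofReal_add hq0 (by linarith)]
    norm_num
  have hae : ∀ᵐ ω ∂μ, ω ∈ {ω | Y ω = 1} ∪ {ω | Y ω = 0} := by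
    rw [ae_iff]
    have : {ω | ¬ ω ∈ ({ω | Y ω = 1} ∪ {ω | Y ω = 0})} =
        ({ω | Y ω = 1} ∪ {ω | Y ω = 0})ᶜ := rfl
    rw [this, measure_compl (hA.union hB) (measure_ne_top μ _), hunion]
    simp
  set g : Ω → ℝ := fun ω => ({ω | Y ω = 1}).indicator (fun _ => f 1) ω
      + ({ω | Y ω = 0}).indicator (fun _ => f 0) ω with hg
  have heq : (fun ω => f (Y ω)) =ᵐ[μ] g := by
    filter_upwards [hae] with ω hω
    rcases hω with h | h
    · have hnb : ω ∉ {ω | Y ω = 0} := fun hb => by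
        have := Set.disjoint_left.1 hdisj h; exact this hb
      simp only [hg, Set.indicator_of_mem h, Set.indicator_of_notMem hnb, add_zero]
      rw [show Y ω = 1 from h]
    · have hna : ω ∉ {ω | Y ω = 1} := fun ha => by
        have := Set.disjoint_left.1 hdisj ha; exact this h
      simp only [hg, Set.indicator_of_mem h, Set.indicator_of_notMem hna, zero_add]
      rw [show Y ω = 0 from h]
  have hint1 : Integrable (({ω | Y ω = 1}).indicator (fun _ => f 1)) μ :=
    (integrable_const (f 1)).indicator hA
  have hint2 : Integrable (({ω | Y ω = 0}).indicator (fun _ => f 0)) μ :=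
    (integrable_const (f 0)).indicator hB
  have hgint : Integrable g μ := hint1.add hint2
  constructor
  · exact hgint.congr heq.symm
  · rw [integral_congr_ae heq, integral_add hint1 hint2,
      integral_indicator_const _ hA, integral_indicator_const _ hB, measureReal_def, measureReal_def, h1, h0,
      ENNReal.toReal_ofReal hq0, ENNReal.toReal_ofReal (by linarith)]
    simp [mul_comm]

set_option maxHeartbeats 1000000 in
lemma KS_aux {Ω : Type*} [MeasurableSpace Ω] (μ : Measure Ω) [IsProbabilityMeasure μ]
    (q : ℝ) (hq0 : 0 < q) (hq1 : q < 1) (hqhalf : q ≠ 1/2)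
    (n : ℕ) (δ : Fin n → Ω → ℝ) (hδ : ∀ j, Measurable (δ j))
    (hindep : iIndepFun δ μ)
    (h1 : ∀ j, μ {ω | δ j ω = 1} = ENNReal.ofReal q)
    (h0 : ∀ j, μ {ω | δ j ω = 0} = ENNReal.ofReal (1-q))
    (c : Fin n → ℝ) (γ : ℝ) (hγ0 : 0 < γ) (hγ1 : γ < 1) (B : ℝ)
    (hBB : Real.sqrt (4*((1-2*q)/(4*Real.log ((1-q)/q)))) / q * Real.sqrt (∑ j, (c j)^2) *
      Real.sqrt (Real.log (2/γ)) ≤ B) :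
    ENNReal.ofReal (1 - γ) ≤ μ {ω | |∑ j, (1 - δ j ω / q) * c j| ≤ B} := by
  have hqne : q ≠ 0 := ne_of_gt hq0
  set K : ℝ := (1-2*q)/(4*Real.log ((1-q)/q)) with hKdef
  have hlogne : Real.log ((1-q)/q) ≠ 0 := by
    intro h
    have h2 : (1-q)/q = 1 := by
      have := Real.exp_log (show (0:ℝ) < (1-q)/q from div_pos (by linarith) hq0)
      rw [h, Real.exp_zero] at this; linarith
    rw [div_eq_one_iff_eq hqne] at h2
    exact hqhalf (by linarith)
  have hK : 0 < K := by
    rcases lt_or_gt_of_ne hqhalf with h | h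
    · have hlp : 0 < Real.log ((1-q)/q) :=
        Real.log_pos (by rw [lt_div_iff₀ hq0]; linarith)
      apply div_pos <;> linarith
    · have hneg : Real.log ((1-q)/q) < 0 :=
        Real.log_neg (div_pos (by linarith) hq0) (by rw [div_lt_one hq0]; linarith)
      apply div_pos_of_neg_of_neg <;> linarith
  set S : ℝ := ∑ j, (c j)^2 with hSdef
  have hS0 : 0 ≤ S := Finset.sum_nonneg fun j _ => sq_nonneg _
  set E : ℝ := Real.log (2/γ) with hEdef
  have hE : 0 < E := Real.log_pos (by rw [lt_div_iff₀ hγ0]; linarith)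
  set B0 : ℝ := Real.sqrt (4*K) / q * Real.sqrt S * Real.sqrt E with hB0def
  have hB00 : 0 ≤ B0 := by
    apply mul_nonneg (mul_nonneg (div_nonneg (Real.sqrt_nonneg _) (le_of_lt hq0))
      (Real.sqrt_nonneg _)) (Real.sqrt_nonneg _)
  have hB0B : B0 ≤ B := hBB
  have hB0 : 0 ≤ B := le_trans hB00 hB0B
  have hB02 : B0^2 = 4*K*S*E/q^2 := by
    rw [hB0def, mul_pow, mul_pow, div_pow, Real.sq_sqrt (by linarith), Real.sq_sqrt hS0,
      Real.sq_sqrt (le_of_lt hE)]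
    ring
  -- random variables
  set X : Fin n → Ω → ℝ := fun j => (fun y => (1 - y/q) * c j) ∘ (δ j) with hXdef
  have hXmeas : ∀ j, Measurable (X j) := fun j =>
    ((measurable_const.sub (measurable_id.div_const _)).mul_const (c j)).comp (hδ j)
  have hindepX : iIndepFun X μ :=
    hindep.comp _ fun j => (measurable_const.sub (measurable_id.div_const _)).mul_const (c j)
  have hpt : ∀ ω, (∑ j, X j) ω = ∑ j, (1 - δ j ω / q) * c j := fun ω => by
    rw [Finset.sum_apply]
    simp only [hXdef, Function.comp_apply]
  -- per-variable integral and mgf bound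
  have hjint : ∀ (j : Fin n) (t : ℝ),
      Integrable (fun ω => Real.exp (t * X j ω)) μ ∧
      mgf (X j) μ t ≤ Real.exp (K * t^2 * (c j)^2 / q^2) := by
    intro j t
    have hbi := bern_integral μ (le_of_lt hq0) (le_of_lt hq1) (hδ j) (h1 j) (h0 j)
      (fun y => Real.exp (t * ((1 - y/q) * c j)))
    have hint : Integrable (fun ω => Real.exp (t * X j ω)) μ := hbi.1
    have hval : ∫ ω, Real.exp (t * X j ω) ∂μ =
        q * Real.exp (t * ((1 - 1/q) * c j)) + (1-q) * Real.exp (t * ((1 - 0/q) * c j)) := hbi.2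
    have ea : t * ((1 - 1/q) * c j) = (t * (-c j/q)) * (1-q) := by
      field_simp
      ring
    have eb : t * ((1 - 0/q) * c j) = -((t * (-c j/q)) * q) := by
      field_simp
      ring
    refine ⟨hint, ?_⟩
    rw [mgf, hval, ea, eb]
    calc q * Real.exp ((t * (-c j/q)) * (1-q)) + (1-q) * Real.exp (-((t * (-c j/q)) * q))
        ≤ Real.exp (K * (t * (-c j/q))^2) := KS_exp hq0 hq1 hqhalf _
      _ = Real.exp (K * t^2 * (c j)^2 / q^2) := by
          congr 1
          field_simp
  set V : ℝ := K * S / q^2 with hVdef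
  have hsum_mgf : ∀ t : ℝ, mgf (∑ j, X j) μ t ≤ Real.exp (t^2 * V) := by
    intro t
    rw [hindepX.mgf_sum hXmeas Finset.univ]
    calc ∏ j, mgf (X j) μ t ≤ ∏ j, Real.exp (K * t^2 * (c j)^2 / q^2) :=
          Finset.prod_le_prod (fun j _ => mgf_nonneg) (fun j _ => (hjint j t).2)
      _ = Real.exp (∑ j, K * t^2 * (c j)^2 / q^2) := by rw [Real.exp_sum]
      _ = Real.exp (t^2 * V) := by
          congr 1
          simp only [hVdef, hSdef, Finset.mul_sum, Finset.sum_div]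
          exact Finset.sum_congr rfl fun j _ => by ring
  have hsum_int : ∀ t : ℝ, Integrable (fun ω => Real.exp (t * (∑ j, X j) ω)) μ := fun t =>
    hindepX.integrable_exp_mul_sum hXmeas (fun j _ => (hjint j t).1)
  rcases eq_or_lt_of_le hS0 with hSzero | hSpos
  · -- S = 0 : all c j = 0
    have hc0 : ∀ j, c j = 0 := by
      intro j
      have h := (Finset.sum_eq_zero_iff_of_nonneg (fun j (_ : j ∈ Finset.univ) =>
        sq_nonneg (c j))).1 hSzero.symm j (Finset.mem_univ j)
      exact pow_eq_zero_iff (n := 2) (by norm_num) |>.1 h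
    have hset : {ω | |∑ j, (1 - δ j ω / q) * c j| ≤ B} = Set.univ := by
      apply Set.eq_univ_of_forall
      intro ω
      simp only [Set.mem_setOf_eq]
      have hz : ∑ j, (1 - δ j ω / q) * c j = 0 :=
        Finset.sum_eq_zero fun j _ => by rw [hc0 j, mul_zero]
      rw [hz, abs_zero]
      exact hB0
    rw [hset, measure_univ]
    exact ENNReal.ofReal_le_one.2 (by linarith)
  · have hV : 0 < V := by
      apply div_pos (mul_pos hK hSpos) (by positivity)
    have hB02' : B0^2 = 4*V*E := by rw [hB02, hVdef]; ring
    set l : ℝ := B0 / (2*V) with hldef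
    have hl0 : 0 ≤ l := div_nonneg hB00 (by linarith)
    have hexp_bound : Real.exp (-l * B0) * Real.exp (l^2 * V) = Real.exp (-B0^2/(4*V)) := by
      rw [← Real.exp_add]
      congr 1
      rw [hldef]
      field_simp
      ring
    have hgamma : Real.exp (-B0^2/(4*V)) = γ/2 := by
      rw [hB02', show -(4*V*E)/(4*V) = -E by field_simp, hEdef, ← Real.log_inv,
        Real.exp_log (inv_pos.2 (div_pos two_pos hγ0)), inv_div]
    have hup : (μ {ω | B0 ≤ (∑ j, X j) ω}).toReal ≤ γ/2 := by
      calc (μ {ω | B0 ≤ (∑ j, X j) ω}).toReal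
          ≤ Real.exp (-l * B0) * mgf (∑ j, X j) μ l :=
            measure_ge_le_exp_mul_mgf B0 hl0 (hsum_int l)
        _ ≤ Real.exp (-l * B0) * Real.exp (l^2 * V) :=
            mul_le_mul_of_nonneg_left (by simpa using hsum_mgf l) (le_of_lt (Real.exp_pos _))
        _ = γ/2 := by rw [hexp_bound, hgamma]
    have hdown : (μ {ω | (∑ j, X j) ω ≤ -B0}).toReal ≤ γ/2 := by
      calc (μ {ω | (∑ j, X j) ω ≤ -B0}).toReal
          ≤ Real.exp (-(-l) * (-B0)) * mgf (∑ j, X j) μ (-l) :=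
            measure_le_le_exp_mul_mgf (-B0) (by linarith) (hsum_int (-l))
        _ ≤ Real.exp (-l * B0) * Real.exp (l^2 * V) := by
            rw [show -(-l) * (-B0) = -l * B0 by ring]
            exact mul_le_mul_of_nonneg_left (by simpa using hsum_mgf (-l))
              (le_of_lt (Real.exp_pos _))
        _ = γ/2 := by rw [hexp_bound, hgamma]
    have hmeassum : Measurable (∑ j, X j : Ω → ℝ) := by
      rw [show (∑ j, X j : Ω → ℝ) = fun ω => ∑ j, X j ω from funext fun ω => Finset.sum_apply _ _ _]
      exact Finset.measurable_sum _ fun j _ => hXmeas j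
    have hupE : μ {ω | B0 ≤ (∑ j, X j) ω} ≤ ENNReal.ofReal (γ/2) :=
      (ENNReal.le_ofReal_iff_toReal_le (measure_ne_top μ _) (by linarith)).2 hup
    have hdownE : μ {ω | (∑ j, X j) ω ≤ -B0} ≤ ENNReal.ofReal (γ/2) :=
      (ENNReal.le_ofReal_iff_toReal_le (measure_ne_top μ _) (by linarith)).2 hdown
    set bad : Set Ω := {ω | B < |(∑ j, X j) ω|} with hbaddef
    have hbadmeas : MeasurableSet bad := measurableSet_lt measurable_const hmeassum.abs
    have hbadsub : bad ⊆ {ω | B0 ≤ (∑ j, X j) ω} ∪ {ω | (∑ j, X j) ω ≤ -B0} := by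
      intro ω hω
      simp only [hbaddef, mem_setOf_eq] at hω
      rcases abs_cases ((∑ j, X j) ω) with ⟨habs, _⟩ | ⟨habs, _⟩
      · left
        simp only [mem_setOf_eq]
        rw [habs] at hω
        linarith
      · right
        simp only [mem_setOf_eq]
        rw [habs] at hω
        linarith
    have hbad : μ bad ≤ ENNReal.ofReal γ := by
      calc μ bad ≤ μ ({ω | B0 ≤ (∑ j, X j) ω} ∪ {ω | (∑ j, X j) ω ≤ -B0}) :=
            measure_mono hbadsub
        _ ≤ μ {ω | B0 ≤ (∑ j, X j) ω} + μ {ω | (∑ j, X j) ω ≤ -B0} := measure_union_le _ _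
        _ ≤ ENNReal.ofReal (γ/2) + ENNReal.ofReal (γ/2) := add_le_add hupE hdownE
        _ = ENNReal.ofReal γ := by
            rw [← ENNReal.ofReal_add (by linarith) (by linarith)]
            norm_num
    have hseteq : {ω | |∑ j, (1 - δ j ω / q) * c j| ≤ B} = badᶜ := by
      ext ω
      simp only [hbaddef, mem_setOf_eq, Set.mem_compl_iff, not_lt, hpt ω]
    rw [hseteq, measure_compl hbadmeas (measure_ne_top μ _), measure_univ]
    calc ENNReal.ofReal (1 - γ) = 1 - ENNReal.ofReal γ := by
          rw [← ENNReal.ofReal_one, ← ENNReal.ofReal_sub _ (le_of_lt hγ0)]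
      _ ≤ 1 - μ bad := tsub_le_tsub_left hbad 1

theorem dare_kearnsSaul_bound
    {Ω : Type*} [MeasurableSpace Ω] (μ : Measure Ω) [IsProbabilityMeasure μ]
    (p : ℝ) (hp : p ∈ Set.Ioo (0 : ℝ) 1) (hp2 : p ≠ 1 / 2)
    (n : ℕ) (δ : Fin n → Ω → ℝ) (hδ : ∀ j, Measurable (δ j))
    (hindep : iIndepFun δ μ)
    (h1 : ∀ j, μ {ω | δ j ω = 1} = ENNReal.ofReal (1 - p))
    (h0 : ∀ j, μ {ω | δ j ω = 0} = ENNReal.ofReal p)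
    (c : Fin n → ℝ) (γ : ℝ) (hγ : γ ∈ Set.Ioo (0 : ℝ) 1) :
    ENNReal.ofReal (1 - γ) ≤
      μ {ω | |∑ j, (1 - δ j ω / (1 - p)) * c j| ≤
        (Real.sqrt ((1 - 2 * p) / Real.log ((1 - p) / p)) / (1 - p)) *
          Real.sqrt (∑ j, (c j) ^ 2) * Real.sqrt (Real.log (2 / γ))} := by
  obtain ⟨hp0, hp1⟩ := hp
  have hpne : (1:ℝ) - p ≠ 0 := by intro h; linarith
  have hlogne : Real.log ((1-p)/p) ≠ 0 := by
    intro h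
    have h2 : (1-p)/p = 1 := by
      have := Real.exp_log (show (0:ℝ) < (1-p)/p from div_pos (by linarith) hp0)
      rw [h, Real.exp_zero] at this; linarith
    rw [div_eq_one_iff_eq (ne_of_gt hp0)] at h2
    exact hp2 (by linarith)
  have hBB' : Real.sqrt (4*((1-2*(1-p))/(4*Real.log ((1-(1-p))/(1-p))))) / (1-p) *
      Real.sqrt (∑ j, (c j)^2) * Real.sqrt (Real.log (2/γ)) =
      (Real.sqrt ((1 - 2 * p) / Real.log ((1 - p) / p)) / (1 - p)) *
        Real.sqrt (∑ j, (c j) ^ 2) * Real.sqrt (Real.log (2 / γ)) := by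
    congr 3
    rw [show (1:ℝ)-(1-p) = p by ring,
      show p/(1-p) = ((1-p)/p)⁻¹ by rw [inv_div], Real.log_inv,
      show (1:ℝ)-2*(1-p) = -(1-2*p) by ring]
    rw [show (4:ℝ)*(-Real.log ((1-p)/p)) = -(4*Real.log ((1-p)/p)) by ring, neg_div, div_neg,
      neg_neg]
    field_simp
  exact KS_aux μ (1-p) (by linarith) (by linarith) (fun h => hp2 (by linarith)) n δ hδ hindep
    h1 (fun j => (h0 j).trans (by congr 1; ring)) c γ hγ.1 hγ.2 _ (le_of_eq hBB')
end
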